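/- Suppose P is a simple Kantor pair over 𝕂. Then C(𝔎(P), ℤ) = C(𝔎(P)); the restriction map χ ↦ (χ|_{P⁻}, χ|_{P⁺}) is an algebra isomorphism of C(𝔎(P)) onto C(P); and consequently P is central if and only if the Lie algebra 𝔎(P) is central. -/

import Mathlib

/-- A Kantor pair over `K`: a pair of modules `(Pm, Pp)` (for `P⁻`, `P⁺`) with trilinear
products `tm : P⁻ × P⁺ × P⁻ → P⁻` and `tp : P⁺ × P⁻ × P⁺ → P⁺` satisfying the Kantor
identities (K1) and (K2). -/
structure KantorPair (K : Type*) [CommRing K] (Pm Pp : Type*)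
    [AddCommGroup Pm] [AddCommGroup Pp] [Module K Pm] [Module K Pp] where
  tm : Pm → Pp → Pm → Pm
  tp : Pp → Pm → Pp → Pp
  tm_add₁ : ∀ x x' y z, tm (x + x') y z = tm x y z + tm x' y z
  tm_smul₁ : ∀ (a : K) x y z, tm (a • x) y z = a • tm x y z
  tm_add₂ : ∀ x y y' z, tm x (y + y') z = tm x y z + tm x y' z
  tm_smul₂ : ∀ (a : K) x y z, tm x (a • y) z = a • tm x y z
  tm_add₃ : ∀ x y z z', tm x y (z + z') = tm x y z + tm x y z'
  tm_smul₃ : ∀ (a : K) x y z, tm x y (a • z) = a • tm x y z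
  tp_add₁ : ∀ x x' y z, tp (x + x') y z = tp x y z + tp x' y z
  tp_smul₁ : ∀ (a : K) x y z, tp (a • x) y z = a • tp x y z
  tp_add₂ : ∀ x y y' z, tp x (y + y') z = tp x y z + tp x y' z
  tp_smul₂ : ∀ (a : K) x y z, tp x (a • y) z = a • tp x y z
  tp_add₃ : ∀ x y z z', tp x y (z + z') = tp x y z + tp x y z'
  tp_smul₃ : ∀ (a : K) x y z, tp x y (a • z) = a • tp x y z
  k1m : ∀ (x z u : Pm) (y w : Pp),
    tm x y (tm z w u) - tm z w (tm x y u) = tm (tm x y z) w u - tm z (tp y x w) u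
  k1p : ∀ (x z u : Pp) (y w : Pm),
    tp x y (tp z w u) - tp z w (tp x y u) = tp (tp x y z) w u - tp z (tm y x w) u
  k2m : ∀ (x z u : Pm) (w v : Pp),
    (tm x (tp w u v) z - tm z (tp w u v) x) + tm u w (tm x v z - tm z v x)
      = tm (tm x w z - tm z w x) v u - tm u v (tm x w z - tm z w x)
  k2p : ∀ (x z u : Pp) (w v : Pm),
    (tp x (tm w u v) z - tp z (tm w u v) x) + tp u w (tp x v z - tp z v x)
      = tp (tp x w z - tp z w x) v u - tp u v (tp x w z - tp z w x)

namespace KantorPair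

variable {K : Type*} [CommRing K] {Pm Pp : Type*}
  [AddCommGroup Pm] [AddCommGroup Pp] [Module K Pm] [Module K Pp]

/-- `Q = (Qm, Qp)` is an ideal of the Kantor pair:
`{P,P,Q} + {P,Q,P} + {Q,P,P} ⊆ Q` on each side. -/
def IsIdealPair (KP : KantorPair K Pm Pp) (Qm : Submodule K Pm) (Qp : Submodule K Pp) : Prop :=
  (∀ (x z : Pm) (y : Pp) (q : Pm), q ∈ Qm → KP.tm x y q ∈ Qm ∧ KP.tm q y z ∈ Qm) ∧
  (∀ (x z : Pm) (r : Pp), r ∈ Qp → KP.tm x r z ∈ Qm) ∧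
  (∀ (x z : Pp) (y : Pm) (q : Pp), q ∈ Qp → KP.tp x y q ∈ Qp ∧ KP.tp q y z ∈ Qp) ∧
  (∀ (x z : Pp) (r : Pm), r ∈ Qm → KP.tp x r z ∈ Qp)

/-- A Kantor pair is simple if some product is nonzero and its only ideals are `0` and `P`. -/
def IsSimplePair (KP : KantorPair K Pm Pp) : Prop :=
  ((∃ x y z, KP.tm x y z ≠ 0) ∨ (∃ x y z, KP.tp x y z ≠ 0)) ∧
  ∀ Qm Qp, KP.IsIdealPair Qm Qp → (Qm = ⊥ ∧ Qp = ⊥) ∨ (Qm = ⊤ ∧ Qp = ⊤)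

/-- `(ωm, ωp)` belongs to the centroid of the Kantor pair. -/
def InCentroid (KP : KantorPair K Pm Pp) (ωm : Pm →ₗ[K] Pm) (ωp : Pp →ₗ[K] Pp) : Prop :=
  (∀ x y z, ωm (KP.tm x y z) = KP.tm (ωm x) y z ∧
      ωm (KP.tm x y z) = KP.tm x (ωp y) z ∧ ωm (KP.tm x y z) = KP.tm x y (ωm z)) ∧
  (∀ x y z, ωp (KP.tp x y z) = KP.tp (ωp x) y z ∧
      ωp (KP.tp x y z) = KP.tp x (ωm y) z ∧ ωp (KP.tp x y z) = KP.tp x y (ωp z))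

/-- The Kantor pair is central: `a ↦ (a • id, a • id)` is an isomorphism of `K`
onto the centroid. -/
def IsCentralPair (KP : KantorPair K Pm Pp) : Prop :=
  (∀ ωm ωp, KP.InCentroid ωm ωp →
    ∃ a : K, ωm = a • (LinearMap.id : Pm →ₗ[K] Pm) ∧ ωp = a • (LinearMap.id : Pp →ₗ[K] Pp)) ∧
  ∀ a : K, a • (LinearMap.id : Pm →ₗ[K] Pm) = 0 →
    a • (LinearMap.id : Pp →ₗ[K] Pp) = 0 → a = 0

/-- A Jordan pair is a Kantor pair with vanishing K-operators, i.e. symmetric products. -/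
def IsJordanPair (KP : KantorPair K Pm Pp) : Prop :=
  (∀ (x z : Pm) (y : Pp), KP.tm x y z = KP.tm z y x) ∧
  (∀ (x z : Pp) (y : Pm), KP.tp x y z = KP.tp z y x)

end KantorPair

/-- A 5-grading (= BC₁-grading) of a Lie algebra `L` over `K`:
an internal direct sum decomposition `L = ⊕_{i ∈ ℤ} L_i` with `⁅L_i, L_j⁆ ⊆ L_{i+j}`
and `L_i = 0` for `|i| > 2`. -/
structure FiveGrading (K : Type*) [CommRing K] (L : Type*) [LieRing L] [LieAlgebra K L] where
  g : ℤ → Submodule K L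
  internal : DirectSum.IsInternal g
  lie_mem : ∀ (i j : ℤ) (x y : L), x ∈ g i → y ∈ g j → ⁅x, y⁆ ∈ g (i + j)
  vanish : ∀ i : ℤ, 2 < |i| → g i = ⊥

/-- `T_L(P) = L_{-1} ⊕ L_1` as a submodule of `L`. -/
def Tsub {K : Type*} [CommRing K] {L : Type*} [LieRing L] [LieAlgebra K L]
    (fg : FiveGrading K L) : Submodule K L :=
  fg.g (-1) ⊔ fg.g 1

/-- The span of all brackets `⁅x, y⁆` with `x ∈ U`, `y ∈ V`. -/
def brkSpan (K : Type*) [CommRing K] {L : Type*} [LieRing L] [LieAlgebra K L]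
    (U V : Submodule K L) : Submodule K L :=
  Submodule.span K {w : L | ∃ x ∈ U, ∃ y ∈ V, w = ⁅x, y⁆}

/-- A 5-graded Lie algebra `L` tightly envelops the Kantor pair `(L_{-1}, L_1)` if it
is generated as a Lie algebra by `T = L_{-1} ⊕ L_1` and `Z(L) ∩ [T, T] = 0`. -/
def Tight (K : Type*) [CommRing K] {L : Type*} [LieRing L] [LieAlgebra K L]
    (fg : FiveGrading K L) : Prop :=
  LieSubalgebra.lieSpan K L ↑(Tsub fg) = ⊤ ∧
  ∀ z ∈ brkSpan K (Tsub fg) (Tsub fg), (∀ u : L, ⁅z, u⁆ = 0) → z = 0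

/-- A 5-graded Lie algebra `(L, fg)` envelops a Kantor pair `KP`: there are identifications
of `P⁻` with `L_{-1}` and `P⁺` with `L_1` under which the products of `KP` are the products
`⁅⁅x, y⁆, z⁆` of `L`. -/
structure Envelops {K : Type*} [CommRing K] {Pm Pp : Type*}
    [AddCommGroup Pm] [AddCommGroup Pp] [Module K Pm] [Module K Pp]
    (KP : KantorPair K Pm Pp)
    {L : Type*} [LieRing L] [LieAlgebra K L] (fg : FiveGrading K L) where
  em : Pm →ₗ[K] L
  ep : Pp →ₗ[K] L
  inj_m : Function.Injective em
  inj_p : Function.Injective ep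
  range_m : LinearMap.range em = fg.g (-1)
  range_p : LinearMap.range ep = fg.g 1
  compat_m : ∀ (x z : Pm) (y : Pp), em (KP.tm x y z) = ⁅⁅em x, ep y⁆, em z⁆
  compat_p : ∀ (x z : Pp) (y : Pm), ep (KP.tp x y z) = ⁅⁅ep x, em y⁆, ep z⁆

/-- A short Peirce grading (SP-grading) of a Kantor pair: a `ℤ`-grading with support
contained in `{0, 1}`. -/
structure SPGrading {K : Type*} [CommRing K] {Pm Pp : Type*}
    [AddCommGroup Pm] [AddCommGroup Pp] [Module K Pm] [Module K Pp]
    (KP : KantorPair K Pm Pp) where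
  Qm : ℤ → Submodule K Pm
  Qp : ℤ → Submodule K Pp
  sup_m : Qm 0 ⊔ Qm 1 = ⊤
  disj_m : Disjoint (Qm 0) (Qm 1)
  sup_p : Qp 0 ⊔ Qp 1 = ⊤
  disj_p : Disjoint (Qp 0) (Qp 1)
  vanish_m : ∀ i : ℤ, i ≠ 0 → i ≠ 1 → Qm i = ⊥
  vanish_p : ∀ i : ℤ, i ≠ 0 → i ≠ 1 → Qp i = ⊥
  grade_m : ∀ (i j k : ℤ) (x : Pm) (y : Pp) (z : Pm),
    x ∈ Qm i → y ∈ Qp j → z ∈ Qm k → KP.tm x y z ∈ Qm (i - j + k)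
  grade_p : ∀ (i j k : ℤ) (x : Pp) (y : Pm) (z : Pp),
    x ∈ Qp i → y ∈ Qm j → z ∈ Qp k → KP.tp x y z ∈ Qp (i - j + k)

/-- `KPc` is the reflection `P̌` of the SP-graded Kantor pair `(KP, SP)`:
`P̌^σ = P₀^{-σ} ⊕ P₁^σ`, with products given by the reflection formula. -/
def IsReflection {K : Type*} [CommRing K] {Pm Pp : Type*}
    [AddCommGroup Pm] [AddCommGroup Pp] [Module K Pm] [Module K Pp]
    (KP : KantorPair K Pm Pp) (SP : SPGrading KP)
    (KPc : KantorPair K ((SP.Qp 0) × (SP.Qm 1)) ((SP.Qm 0) × (SP.Qp 1))) : Prop :=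
  (∀ (a c : (SP.Qm 0) × (SP.Qp 1)) (b : (SP.Qp 0) × (SP.Qm 1)),
    ((KPc.tp a b c).1 : Pm)
      = KP.tm a.1 b.1 c.1 - KP.tm b.2 a.2 c.1 + (KP.tm a.1 c.2 b.2 - KP.tm b.2 c.2 a.1) ∧
    ((KPc.tp a b c).2 : Pp)
      = KP.tp a.2 b.2 c.2 - KP.tp b.1 a.1 c.2 + (KP.tp a.2 c.1 b.1 - KP.tp b.1 c.1 a.2)) ∧
  (∀ (a c : (SP.Qp 0) × (SP.Qm 1)) (b : (SP.Qm 0) × (SP.Qp 1)),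
    ((KPc.tm a b c).1 : Pp)
      = KP.tp a.1 b.1 c.1 - KP.tp b.2 a.2 c.1 + (KP.tp a.1 c.2 b.2 - KP.tp b.2 c.2 a.1) ∧
    ((KPc.tm a b c).2 : Pm)
      = KP.tm a.2 b.2 c.2 - KP.tm b.1 a.1 c.2 + (KP.tm a.2 c.1 b.1 - KP.tm b.1 c.1 a.2))

/-- The centroid `C(L)` of a Lie algebra. -/
def LieCentroid (K : Type*) [CommRing K] (L : Type*) [LieRing L] [LieAlgebra K L] :
    Set (Module.End K L) :=
  {χ | ∀ x y : L, χ ⁅x, y⁆ = ⁅χ x, y⁆}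

/-- `ω = (ω⁻, ω⁺)` is the restriction of `χ` to `(P⁻, P⁺)` under the identifications. -/
def RestrRel {K : Type*} [CommRing K] {Pm Pp : Type*}
    [AddCommGroup Pm] [AddCommGroup Pp] [Module K Pm] [Module K Pp]
    {KP : KantorPair K Pm Pp} {L : Type*} [LieRing L] [LieAlgebra K L]
    {fg : FiveGrading K L} (E : Envelops KP fg)
    (χ : Module.End K L) (ω : (Pm →ₗ[K] Pm) × (Pp →ₗ[K] Pp)) : Prop :=
  (∀ x : Pm, χ (E.em x) = E.em (ω.1 x)) ∧ (∀ y : Pp, χ (E.ep y) = E.ep (ω.2 y))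

namespace S3
open DirectSum

variable {K : Type*} [CommRing K] {L : Type*} [LieRing L] [LieAlgebra K L]

noncomputable def dec (fg : FiveGrading K L) : DirectSum.Decomposition fg.g :=
  fg.internal.chooseDecomposition

/-- Projection onto `g i`, valued in the submodule. -/
noncomputable def prS (fg : FiveGrading K L) (i : ℤ) : L →ₗ[K] fg.g i :=
  letI := dec fg
  (DirectSum.component K ℤ (fun j => fg.g j) i) ∘ₗ
    (DirectSum.decomposeLinearEquiv fg.g : L →ₗ[K] ⨁ j, fg.g j)

/-- Projection onto `g i` as an endomorphism of `L`. -/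
noncomputable def pr (fg : FiveGrading K L) (i : ℤ) : L →ₗ[K] L :=
  (fg.g i).subtype ∘ₗ prS fg i

variable (fg : FiveGrading K L)

lemma prS_apply (i : ℤ) (x : L) :
    prS fg i x = (letI := dec fg; DirectSum.decompose fg.g x i) := rfl

lemma pr_mem (i : ℤ) (x : L) : pr fg i x ∈ fg.g i := (prS fg i x).2

lemma prS_of_mem_same {i : ℤ} {x : L} (hx : x ∈ fg.g i) : prS fg i x = ⟨x, hx⟩ := by
  letI := dec fg
  ext
  exact DirectSum.decompose_of_mem_same fg.g hx

lemma pr_of_mem_same {i : ℤ} {x : L} (hx : x ∈ fg.g i) : pr fg i x = x := by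
  simp [pr, prS_of_mem_same fg hx]

lemma prS_of_mem_ne {i j : ℤ} {x : L} (hx : x ∈ fg.g i) (h : i ≠ j) : prS fg j x = 0 := by
  letI := dec fg
  ext
  exact DirectSum.decompose_of_mem_ne fg.g hx h

lemma pr_of_mem_ne {i j : ℤ} {x : L} (hx : x ∈ fg.g i) (h : i ≠ j) : pr fg j x = 0 := by
  simp [pr, prS_of_mem_ne fg hx h]

lemma mem_vanish {i : ℤ} {x : L} (h : 2 < |i|) (hx : x ∈ fg.g i) : x = 0 := by
  have := fg.vanish i h
  rw [this] at hx
  simpa using hx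

lemma sum_pr (x : L) : ∑ i ∈ Finset.Icc (-2 : ℤ) 2, pr fg i x = x := by
  classical
  letI := dec fg
  have h1 := DirectSum.sum_support_decompose fg.g x
  have hsub : (DirectSum.decompose fg.g x).support ⊆ Finset.Icc (-2 : ℤ) 2 := by
    intro i hi
    by_contra hic
    have habs : 2 < |i| := by
      simp only [Finset.mem_Icc, not_and_or, not_le] at hic
      rcases hic with h | h
      · rw [abs_of_neg (by omega)]; omega
      · rw [abs_of_pos (by omega)]; omega
    have : (DirectSum.decompose fg.g x i : L) = 0 :=
      mem_vanish fg habs (DirectSum.decompose fg.g x i).2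
    have : DirectSum.decompose fg.g x i = 0 := Subtype.ext this
    exact (DFinsupp.mem_support_iff.mp hi) this
  calc ∑ i ∈ Finset.Icc (-2 : ℤ) 2, pr fg i x
      = ∑ i ∈ (DirectSum.decompose fg.g x).support, (DirectSum.decompose fg.g x i : L) := by
        refine (Finset.sum_subset hsub ?_).symm
        intro i _ hi
        have : DirectSum.decompose fg.g x i = 0 := DFinsupp.notMem_support_iff.mp hi
        simp [pr, prS_apply, this]
    _ = x := h1

lemma bracket_vanish {i j : ℤ} {x y : L} (hx : x ∈ fg.g i) (hy : y ∈ fg.g j)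
    (h : 2 < |i + j|) : ⁅x, y⁆ = 0 :=
  mem_vanish fg h (fg.lie_mem i j x y hx hy)

end S3
namespace S3

variable {K : Type*} [CommRing K] {Pm Pp : Type*} [AddCommGroup Pm] [AddCommGroup Pp]
  [Module K Pm] [Module K Pp] {L : Type*} [LieRing L] [LieAlgebra K L]
  {KP : KantorPair K Pm Pp} {fg : FiveGrading K L}

variable (E : Envelops KP fg)

lemma em_mem (x : Pm) : E.em x ∈ fg.g (-1) := E.range_m ▸ LinearMap.mem_range_self _ x
lemma ep_mem (y : Pp) : E.ep y ∈ fg.g 1 := E.range_p ▸ LinearMap.mem_range_self _ y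

lemma em_mem_T (x : Pm) : E.em x ∈ Tsub fg := Submodule.mem_sup_left (em_mem E x)
lemma ep_mem_T (y : Pp) : E.ep y ∈ Tsub fg := Submodule.mem_sup_right (ep_mem E y)

lemma exists_em {v : L} (hv : v ∈ fg.g (-1)) : ∃ x, v = E.em x := by
  rw [← E.range_m] at hv; obtain ⟨x, hx⟩ := hv; exact ⟨x, hx.symm⟩

lemma exists_ep {v : L} (hv : v ∈ fg.g 1) : ∃ y, v = E.ep y := by
  rw [← E.range_p] at hv; obtain ⟨y, hy⟩ := hv; exact ⟨y, hy.symm⟩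

/-- `⁅⁅em x, ep y⁆, ep v⁆ = - ep (tp y x v)` -/
lemma J0R (x : Pm) (y v : Pp) :
    ⁅⁅E.em x, E.ep y⁆, E.ep v⁆ = -E.ep (KP.tp y x v) := by
  rw [← lie_skew (E.em x) (E.ep y), neg_lie, ← E.compat_p]

/-- `⁅⁅em x, em x'⁆, ep v⁆ = em (tm x v x') - em (tm x' v x)` -/
lemma Jm2 (x x' : Pm) (v : Pp) :
    ⁅⁅E.em x, E.em x'⁆, E.ep v⁆ = E.em (KP.tm x v x') - E.em (KP.tm x' v x) := by
  have h := leibniz_lie (E.em x) (E.em x') (E.ep v)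
  -- ⁅em x, ⁅em x', ep v⁆⁆ = ⁅⁅em x, em x'⁆, ep v⁆ + ⁅em x', ⁅em x, ep v⁆⁆
  have h1 : ⁅E.em x, ⁅E.em x', E.ep v⁆⁆ = -E.em (KP.tm x' v x) := by
    rw [← lie_skew (E.em x) ⁅E.em x', E.ep v⁆, ← E.compat_m]
  have h2 : ⁅E.em x', ⁅E.em x, E.ep v⁆⁆ = -E.em (KP.tm x v x') := by
    rw [← lie_skew (E.em x') ⁅E.em x, E.ep v⁆, ← E.compat_m]
  have h' : ⁅⁅E.em x, E.em x'⁆, E.ep v⁆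
      = ⁅E.em x, ⁅E.em x', E.ep v⁆⁆ - ⁅E.em x', ⁅E.em x, E.ep v⁆⁆ := by rw [h]; abel
  rw [h', h1, h2]; abel

/-- `⁅⁅ep y, ep y'⁆, em u⁆ = ep (tp y u y') - ep (tp y' u y)` -/
lemma Jp2 (y y' : Pp) (u : Pm) :
    ⁅⁅E.ep y, E.ep y'⁆, E.em u⁆ = E.ep (KP.tp y u y') - E.ep (KP.tp y' u y) := by
  have h := leibniz_lie (E.ep y) (E.ep y') (E.em u)
  have h1 : ⁅E.ep y, ⁅E.ep y', E.em u⁆⁆ = -E.ep (KP.tp y' u y) := by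
    rw [← lie_skew (E.ep y) ⁅E.ep y', E.em u⁆, ← E.compat_p]
  have h2 : ⁅E.ep y', ⁅E.ep y, E.em u⁆⁆ = -E.ep (KP.tp y u y') := by
    rw [← lie_skew (E.ep y') ⁅E.ep y, E.em u⁆, ← E.compat_p]
  have h' : ⁅⁅E.ep y, E.ep y'⁆, E.em u⁆
      = ⁅E.ep y, ⁅E.ep y', E.em u⁆⁆ - ⁅E.ep y', ⁅E.ep y, E.em u⁆⁆ := by rw [h]; abel
  rw [h', h1, h2]; abel

/-- generators of degree 0, -2, 2 parts -/
def S0 : Set L := {w | ∃ x y, w = ⁅E.em x, E.ep y⁆}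
def Sm2 : Set L := {w | ∃ x x', w = ⁅E.em x, E.em x'⁆}
def Sp2 : Set L := {w | ∃ y y', w = ⁅E.ep y, E.ep y'⁆}

lemma spanS0_le : Submodule.span K (S0 E) ≤ fg.g 0 := by
  rw [Submodule.span_le]
  rintro w ⟨x, y, rfl⟩
  exact fg.lie_mem (-1) 1 _ _ (em_mem E x) (ep_mem E y)

lemma spanSm2_le : Submodule.span K (Sm2 E) ≤ fg.g (-2) := by
  rw [Submodule.span_le]
  rintro w ⟨x, x', rfl⟩
  exact fg.lie_mem (-1) (-1) _ _ (em_mem E x) (em_mem E x')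

lemma spanSp2_le : Submodule.span K (Sp2 E) ≤ fg.g 2 := by
  rw [Submodule.span_le]
  rintro w ⟨y, y', rfl⟩
  exact fg.lie_mem 1 1 _ _ (ep_mem E y) (ep_mem E y')

lemma spanS0_le_brk : Submodule.span K (S0 E) ≤ brkSpan K (Tsub fg) (Tsub fg) := by
  rw [Submodule.span_le]
  rintro w ⟨x, y, rfl⟩
  exact Submodule.subset_span ⟨_, em_mem_T E x, _, ep_mem_T E y, rfl⟩

lemma spanSm2_le_brk : Submodule.span K (Sm2 E) ≤ brkSpan K (Tsub fg) (Tsub fg) := by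
  rw [Submodule.span_le]
  rintro w ⟨x, x', rfl⟩
  exact Submodule.subset_span ⟨_, em_mem_T E x, _, em_mem_T E x', rfl⟩

lemma spanSp2_le_brk : Submodule.span K (Sp2 E) ≤ brkSpan K (Tsub fg) (Tsub fg) := by
  rw [Submodule.span_le]
  rintro w ⟨y, y', rfl⟩
  exact Submodule.subset_span ⟨_, ep_mem_T E y, _, ep_mem_T E y', rfl⟩

end S3
namespace S3

variable {K : Type*} [CommRing K] {Pm Pp : Type*} [AddCommGroup Pm] [AddCommGroup Pp]
  [Module K Pm] [Module K Pp] {L : Type*} [LieRing L] [LieAlgebra K L]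
  {KP : KantorPair K Pm Pp} {fg : FiveGrading K L}

variable (E : Envelops KP fg)

lemma b_00 {s t : L} (hs : s ∈ Submodule.span K (S0 E)) (ht : t ∈ Submodule.span K (S0 E)) :
    ⁅s, t⁆ ∈ Submodule.span K (S0 E) := by
  induction ht using Submodule.span_induction with
  | mem w hw =>
    obtain ⟨a, b, rfl⟩ := hw
    rw [leibniz_lie]
    obtain ⟨c, hc⟩ := exists_em E (fg.lie_mem 0 (-1) s (E.em a) (spanS0_le E hs) (em_mem E a))
    obtain ⟨d, hd⟩ := exists_ep E (fg.lie_mem 0 1 s (E.ep b) (spanS0_le E hs) (ep_mem E b))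
    rw [hc, hd]
    exact add_mem (Submodule.subset_span ⟨c, b, rfl⟩) (Submodule.subset_span ⟨a, d, rfl⟩)
  | zero => rw [lie_zero]; exact zero_mem _
  | add x y hx hy ihx ihy => rw [lie_add]; exact add_mem ihx ihy
  | smul a x hx ihx => rw [lie_smul]; exact Submodule.smul_mem _ a ihx

lemma b_0m2 {s t : L} (hs : s ∈ Submodule.span K (S0 E)) (ht : t ∈ Submodule.span K (Sm2 E)) :
    ⁅s, t⁆ ∈ Submodule.span K (Sm2 E) := by
  induction ht using Submodule.span_induction with
  | mem w hw =>
    obtain ⟨a, b, rfl⟩ := hw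
    rw [leibniz_lie]
    obtain ⟨c, hc⟩ := exists_em E (fg.lie_mem 0 (-1) s (E.em a) (spanS0_le E hs) (em_mem E a))
    obtain ⟨d, hd⟩ := exists_em E (fg.lie_mem 0 (-1) s (E.em b) (spanS0_le E hs) (em_mem E b))
    rw [hc, hd]
    exact add_mem (Submodule.subset_span ⟨c, b, rfl⟩) (Submodule.subset_span ⟨a, d, rfl⟩)
  | zero => rw [lie_zero]; exact zero_mem _
  | add x y hx hy ihx ihy => rw [lie_add]; exact add_mem ihx ihy
  | smul a x hx ihx => rw [lie_smul]; exact Submodule.smul_mem _ a ihx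

lemma b_0p2 {s t : L} (hs : s ∈ Submodule.span K (S0 E)) (ht : t ∈ Submodule.span K (Sp2 E)) :
    ⁅s, t⁆ ∈ Submodule.span K (Sp2 E) := by
  induction ht using Submodule.span_induction with
  | mem w hw =>
    obtain ⟨a, b, rfl⟩ := hw
    rw [leibniz_lie]
    obtain ⟨c, hc⟩ := exists_ep E (fg.lie_mem 0 1 s (E.ep a) (spanS0_le E hs) (ep_mem E a))
    obtain ⟨d, hd⟩ := exists_ep E (fg.lie_mem 0 1 s (E.ep b) (spanS0_le E hs) (ep_mem E b))
    rw [hc, hd]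
    exact add_mem (Submodule.subset_span ⟨c, b, rfl⟩) (Submodule.subset_span ⟨a, d, rfl⟩)
  | zero => rw [lie_zero]; exact zero_mem _
  | add x y hx hy ihx ihy => rw [lie_add]; exact add_mem ihx ihy
  | smul a x hx ihx => rw [lie_smul]; exact Submodule.smul_mem _ a ihx

lemma b_m2p2 {s t : L} (hs : s ∈ Submodule.span K (Sm2 E)) (ht : t ∈ Submodule.span K (Sp2 E)) :
    ⁅s, t⁆ ∈ Submodule.span K (S0 E) := by
  induction ht using Submodule.span_induction with
  | mem w hw =>
    obtain ⟨a, b, rfl⟩ := hw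
    rw [leibniz_lie]
    obtain ⟨c, hc⟩ := exists_em E
      (by simpa using fg.lie_mem (-2) 1 s (E.ep a) (spanSm2_le E hs) (ep_mem E a))
    obtain ⟨d, hd⟩ := exists_em E
      (by simpa using fg.lie_mem (-2) 1 s (E.ep b) (spanSm2_le E hs) (ep_mem E b))
    rw [hc, hd]
    refine add_mem (Submodule.subset_span ⟨c, b, rfl⟩) ?_
    rw [← lie_skew]
    exact neg_mem (Submodule.subset_span ⟨d, a, rfl⟩)
  | zero => rw [lie_zero]; exact zero_mem _
  | add x y hx hy ihx ihy => rw [lie_add]; exact add_mem ihx ihy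
  | smul a x hx ihx => rw [lie_smul]; exact Submodule.smul_mem _ a ihx

/-- the candidate for `L` as sum of the five pieces -/
def NN : Submodule K L :=
  fg.g (-1) ⊔ fg.g 1 ⊔ Submodule.span K (S0 E) ⊔ Submodule.span K (Sm2 E) ⊔
    Submodule.span K (Sp2 E)

lemma gm1_le_N : fg.g (-1) ≤ NN E := le_sup_left.trans (le_sup_left.trans (le_sup_left.trans le_sup_left))
lemma gp1_le_N : fg.g 1 ≤ NN E := le_sup_right.trans (le_sup_left.trans (le_sup_left.trans le_sup_left))
lemma s0_le_N : Submodule.span K (S0 E) ≤ NN E := le_sup_right.trans (le_sup_left.trans le_sup_left)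
lemma sm2_le_N : Submodule.span K (Sm2 E) ≤ NN E := le_sup_right.trans le_sup_left
lemma sp2_le_N : Submodule.span K (Sp2 E) ≤ NN E := le_sup_right

lemma memN_cases {u : L} (hu : u ∈ NN E) :
    ∃ a b c d e, a ∈ fg.g (-1) ∧ b ∈ fg.g 1 ∧ c ∈ Submodule.span K (S0 E) ∧
      d ∈ Submodule.span K (Sm2 E) ∧ e ∈ Submodule.span K (Sp2 E) ∧ u = a + b + c + d + e := by
  obtain ⟨u4, hu4, e, he, rfl⟩ := Submodule.mem_sup.mp hu
  obtain ⟨u3, hu3, d, hd, rfl⟩ := Submodule.mem_sup.mp hu4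
  obtain ⟨u2, hu2, c, hc, rfl⟩ := Submodule.mem_sup.mp hu3
  obtain ⟨a, ha, b, hb, rfl⟩ := Submodule.mem_sup.mp hu2
  exact ⟨a, b, c, d, e, ha, hb, hc, hd, he, rfl⟩

/-- bracket of class elements -/
lemma Ncl {u v : L}
    (hu : u ∈ fg.g (-1) ∨ u ∈ fg.g 1 ∨ u ∈ Submodule.span K (S0 E) ∨
      u ∈ Submodule.span K (Sm2 E) ∨ u ∈ Submodule.span K (Sp2 E))
    (hv : v ∈ fg.g (-1) ∨ v ∈ fg.g 1 ∨ v ∈ Submodule.span K (S0 E) ∨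
      v ∈ Submodule.span K (Sm2 E) ∨ v ∈ Submodule.span K (Sp2 E)) :
    ⁅u, v⁆ ∈ NN E := by
  rcases hu with hu | hu | hu | hu | hu <;> rcases hv with hv | hv | hv | hv | hv
  -- u ∈ g(-1)
  · obtain ⟨x, rfl⟩ := exists_em E hu; obtain ⟨x', rfl⟩ := exists_em E hv
    exact sm2_le_N E (Submodule.subset_span ⟨x, x', rfl⟩)
  · obtain ⟨x, rfl⟩ := exists_em E hu; obtain ⟨y, rfl⟩ := exists_ep E hv
    exact s0_le_N E (Submodule.subset_span ⟨x, y, rfl⟩)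
  · exact gm1_le_N E (by simpa using fg.lie_mem (-1) 0 _ _ hu (spanS0_le E hv))
  · rw [bracket_vanish fg hu (spanSm2_le E hv) (by norm_num)]; exact zero_mem _
  · exact gp1_le_N E (by simpa using fg.lie_mem (-1) 2 _ _ hu (spanSp2_le E hv))
  -- u ∈ g 1
  · obtain ⟨y, rfl⟩ := exists_ep E hu; obtain ⟨x, rfl⟩ := exists_em E hv
    rw [← lie_skew]
    exact neg_mem (s0_le_N E (Submodule.subset_span ⟨x, y, rfl⟩))
  · obtain ⟨y, rfl⟩ := exists_ep E hu; obtain ⟨y', rfl⟩ := exists_ep E hv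
    exact sp2_le_N E (Submodule.subset_span ⟨y, y', rfl⟩)
  · exact gp1_le_N E (by simpa using fg.lie_mem 1 0 _ _ hu (spanS0_le E hv))
  · exact gm1_le_N E (by simpa using fg.lie_mem 1 (-2) _ _ hu (spanSm2_le E hv))
  · rw [bracket_vanish fg hu (spanSp2_le E hv) (by norm_num)]; exact zero_mem _
  -- u ∈ span S0
  · exact gm1_le_N E (by simpa using fg.lie_mem 0 (-1) _ _ (spanS0_le E hu) hv)
  · exact gp1_le_N E (by simpa using fg.lie_mem 0 1 _ _ (spanS0_le E hu) hv)
  · exact s0_le_N E (b_00 E hu hv)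
  · exact sm2_le_N E (b_0m2 E hu hv)
  · exact sp2_le_N E (b_0p2 E hu hv)
  -- u ∈ span Sm2
  · rw [bracket_vanish fg (spanSm2_le E hu) hv (by norm_num)]; exact zero_mem _
  · exact gm1_le_N E (by simpa using fg.lie_mem (-2) 1 _ _ (spanSm2_le E hu) hv)
  · rw [← lie_skew]; exact neg_mem (sm2_le_N E (b_0m2 E hv hu))
  · rw [bracket_vanish fg (spanSm2_le E hu) (spanSm2_le E hv) (by norm_num)]; exact zero_mem _
  · exact s0_le_N E (b_m2p2 E hu hv)
  -- u ∈ span Sp2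
  · exact gp1_le_N E (by simpa using fg.lie_mem 2 (-1) _ _ (spanSp2_le E hu) hv)
  · rw [bracket_vanish fg (spanSp2_le E hu) hv (by norm_num)]; exact zero_mem _
  · rw [← lie_skew]; exact neg_mem (sp2_le_N E (b_0p2 E hv hu))
  · rw [← lie_skew]; exact neg_mem (s0_le_N E (b_m2p2 E hv hu))
  · rw [bracket_vanish fg (spanSp2_le E hu) (spanSp2_le E hv) (by norm_num)]; exact zero_mem _

lemma N_eq_top (ht : Tight K fg) : NN E = ⊤ := by
  have hcl : ∀ u ∈ NN E, ∀ v ∈ NN E, ⁅u, v⁆ ∈ NN E := by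
    intro u hu v hv
    obtain ⟨a, b, c, d, e, ha, hb, hc, hd, he, rfl⟩ := memN_cases E hu
    obtain ⟨a', b', c', d', e', ha', hb', hc', hd', he', rfl⟩ := memN_cases E hv
    have h5 : ∀ w, (w ∈ fg.g (-1) ∨ w ∈ fg.g 1 ∨ w ∈ Submodule.span K (S0 E) ∨
        w ∈ Submodule.span K (Sm2 E) ∨ w ∈ Submodule.span K (Sp2 E)) →
        ⁅w, a' + b' + c' + d' + e'⁆ ∈ NN E := by
      intro w hw
      simp only [lie_add]
      exact add_mem (add_mem (add_mem (add_mem (Ncl E hw (Or.inl ha'))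
        (Ncl E hw (Or.inr (Or.inl hb')))) (Ncl E hw (Or.inr (Or.inr (Or.inl hc')))))
        (Ncl E hw (Or.inr (Or.inr (Or.inr (Or.inl hd'))))))
        (Ncl E hw (Or.inr (Or.inr (Or.inr (Or.inr he')))))
    simp only [add_lie]
    exact add_mem (add_mem (add_mem (add_mem (h5 a (Or.inl ha))
      (h5 b (Or.inr (Or.inl hb)))) (h5 c (Or.inr (Or.inr (Or.inl hc)))))
      (h5 d (Or.inr (Or.inr (Or.inr (Or.inl hd))))))
      (h5 e (Or.inr (Or.inr (Or.inr (Or.inr he)))))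
  let NL : LieSubalgebra K L :=
    { NN E with lie_mem' := fun {x y} hx hy => hcl x hx y hy }
  have hT : (Tsub fg : Set L) ⊆ NL := by
    intro w hw
    obtain ⟨a, ha, b, hb, rfl⟩ := Submodule.mem_sup.mp hw
    exact add_mem (gm1_le_N E ha) (gp1_le_N E hb)
  have := LieSubalgebra.lieSpan_le.mpr hT
  rw [ht.1] at this
  exact eq_top_iff.mpr fun x _ => this trivial

lemma g0_le_span (ht : Tight K fg) : fg.g 0 ≤ Submodule.span K (S0 E) := by
  intro w hw
  have hwN : w ∈ NN E := by rw [N_eq_top E ht]; trivial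
  obtain ⟨a, b, c, d, e, ha, hb, hc, hd, he, hsum⟩ := memN_cases E hwN
  have := congrArg (pr fg 0) hsum
  rw [pr_of_mem_same fg hw] at this
  simp only [map_add] at this
  rw [pr_of_mem_ne fg ha (by norm_num), pr_of_mem_ne fg hb (by norm_num),
    pr_of_mem_same fg (spanS0_le E hc), pr_of_mem_ne fg (spanSm2_le E hd) (by norm_num),
    pr_of_mem_ne fg (spanSp2_le E he) (by norm_num)] at this
  have hw' : w = c := by rw [this]; abel
  rw [hw']; exact hc

lemma gm2_le_span (ht : Tight K fg) : fg.g (-2) ≤ Submodule.span K (Sm2 E) := by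
  intro w hw
  have hwN : w ∈ NN E := by rw [N_eq_top E ht]; trivial
  obtain ⟨a, b, c, d, e, ha, hb, hc, hd, he, hsum⟩ := memN_cases E hwN
  have := congrArg (pr fg (-2)) hsum
  rw [pr_of_mem_same fg hw] at this
  simp only [map_add] at this
  rw [pr_of_mem_ne fg ha (by norm_num), pr_of_mem_ne fg hb (by norm_num),
    pr_of_mem_ne fg (spanS0_le E hc) (by norm_num), pr_of_mem_same fg (spanSm2_le E hd),
    pr_of_mem_ne fg (spanSp2_le E he) (by norm_num)] at this
  have hw' : w = d := by rw [this]; abel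
  rw [hw']; exact hd

lemma gp2_le_span (ht : Tight K fg) : fg.g 2 ≤ Submodule.span K (Sp2 E) := by
  intro w hw
  have hwN : w ∈ NN E := by rw [N_eq_top E ht]; trivial
  obtain ⟨a, b, c, d, e, ha, hb, hc, hd, he, hsum⟩ := memN_cases E hwN
  have := congrArg (pr fg 2) hsum
  rw [pr_of_mem_same fg hw] at this
  simp only [map_add] at this
  rw [pr_of_mem_ne fg ha (by norm_num), pr_of_mem_ne fg hb (by norm_num),
    pr_of_mem_ne fg (spanS0_le E hc) (by norm_num), pr_of_mem_ne fg (spanSm2_le E hd) (by norm_num),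
    pr_of_mem_same fg (spanSp2_le E he)] at this
  have hw' : w = e := by rw [this]; abel
  rw [hw']; exact he

/-- key tightness lemma: an element of `[T,T]` whose brackets with `g(-1)` and `g 1`
vanish is zero -/
lemma keyzero (ht : Tight K fg) {z : L} (hz : z ∈ brkSpan K (Tsub fg) (Tsub fg))
    (hm : ∀ u, ⁅z, E.em u⁆ = 0) (hp : ∀ v, ⁅z, E.ep v⁆ = 0) : z = 0 := by
  refine ht.2 z hz ?_
  have hC : ∀ u : L, u ∈ (⊤ : LieSubalgebra K L) → ⁅z, u⁆ = 0 → True := fun _ _ _ => trivial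
  clear hC
  let C : LieSubalgebra K L :=
    { carrier := {u | ⁅z, u⁆ = 0}
      add_mem' := by intro a b ha hb; simp only [Set.mem_setOf_eq, lie_add] at *; rw [ha, hb, add_zero]
      zero_mem' := by simp
      smul_mem' := by intro c a ha; simp only [Set.mem_setOf_eq, lie_smul] at *; rw [ha, smul_zero]
      lie_mem' := by
        intro a b ha hb
        simp only [Set.mem_setOf_eq] at *
        rw [leibniz_lie, ha, hb, zero_lie, lie_zero, add_zero]
      }
  have hT : (Tsub fg : Set L) ⊆ C := by
    intro w hw
    obtain ⟨a, ha, b, hb, rfl⟩ := Submodule.mem_sup.mp hw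
    obtain ⟨x, rfl⟩ := exists_em E ha
    obtain ⟨y, rfl⟩ := exists_ep E hb
    show ⁅z, E.em x + E.ep y⁆ = 0
    rw [lie_add, hm, hp, add_zero]
  have hle := LieSubalgebra.lieSpan_le.mpr hT
  rw [ht.1] at hle
  intro u
  exact hle (show u ∈ (⊤ : LieSubalgebra K L) from trivial)

end S3
namespace S3

variable {K : Type*} [CommRing K] {Pm Pp : Type*} [AddCommGroup Pm] [AddCommGroup Pp]
  [Module K Pm] [Module K Pp] {L : Type*} [LieRing L] [LieAlgebra K L]
  {KP : KantorPair K Pm Pp} {fg : FiveGrading K L}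

lemma sum_lie' {ι : Type*} (s : Finset ι) (f : ι → L) (y : L) :
    ⁅∑ i ∈ s, f i, y⁆ = ∑ i ∈ s, ⁅f i, y⁆ := by
  classical
  induction s using Finset.cons_induction with
  | empty => simp
  | cons i s hi ih => rw [Finset.sum_cons, Finset.sum_cons, add_lie, ih]

lemma lie_sum' {ι : Type*} (s : Finset ι) (f : ι → L) (y : L) :
    ⁅y, ∑ i ∈ s, f i⁆ = ∑ i ∈ s, ⁅y, f i⁆ := by
  classical
  induction s using Finset.cons_induction with
  | empty => simp
  | cons i s hi ih => rw [Finset.sum_cons, Finset.sum_cons, lie_add, ih]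

lemma cent_snd {χ : Module.End K L} (hχ : χ ∈ LieCentroid K L) (x y : L) :
    χ ⁅x, y⁆ = ⁅x, χ y⁆ := by
  have h1 : χ ⁅x, y⁆ = -χ ⁅y, x⁆ := by rw [← lie_skew x y, map_neg]
  rw [h1, hχ y x, lie_skew]

lemma tm_zero₁ (y : Pp) (z : Pm) : KP.tm 0 y z = 0 := by
  have := KP.tm_smul₁ 0 0 y z; rwa [zero_smul, zero_smul] at this

lemma tm_zero₂ (x z : Pm) : KP.tm x 0 z = 0 := by
  have := KP.tm_smul₂ 0 x 0 z; rwa [zero_smul, zero_smul] at this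

lemma tp_zero₁ (y : Pm) (z : Pp) : KP.tp 0 y z = 0 := by
  have := KP.tp_smul₁ 0 0 y z; rwa [zero_smul, zero_smul] at this

lemma tp_zero₂ (x z : Pp) : KP.tp x 0 z = 0 := by
  have := KP.tp_smul₂ 0 x 0 z; rwa [zero_smul, zero_smul] at this

lemma exists_ne_zero (hs : KP.IsSimplePair) : (∃ x : Pm, x ≠ 0) ∧ ∃ y : Pp, y ≠ 0 := by
  rcases hs.1 with ⟨x, y, z, hne⟩ | ⟨x, y, z, hne⟩
  · constructor
    · exact ⟨x, fun h => hne (by rw [h, tm_zero₁])⟩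
    · exact ⟨y, fun h => hne (by rw [h, tm_zero₂])⟩
  · constructor
    · exact ⟨y, fun h => hne (by rw [h, tp_zero₂])⟩
    · exact ⟨x, fun h => hne (by rw [h, tp_zero₁])⟩

variable (E : Envelops KP fg)

lemma em_ne_zero {x : Pm} (hx : x ≠ 0) : E.em x ≠ 0 := fun h =>
  hx (E.inj_m (by rw [h, map_zero]))

lemma ep_ne_zero {y : Pp} (hy : y ≠ 0) : E.ep y ≠ 0 := fun h =>
  hy (E.inj_p (by rw [h, map_zero]))

/-- Every graded ideal of `L` is `⊥` or `⊤`. -/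
lemma graded_simple (E : Envelops KP fg) (hs : KP.IsSimplePair) (ht : Tight K fg) (I : Submodule K L)
    (hId : ∀ (u x : L), x ∈ I → ⁅u, x⁆ ∈ I)
    (hGr : ∀ x ∈ I, ∀ j, pr fg j x ∈ I) : I = ⊥ ∨ I = ⊤ := by
  have hId' : ∀ (u x : L), x ∈ I → ⁅x, u⁆ ∈ I := fun u x hx => by
    rw [← lie_skew]; exact neg_mem (hId u x hx)
  have hpair : KP.IsIdealPair (I.comap E.em) (I.comap E.ep) := by
    refine ⟨fun x z y q hq => ⟨?_, ?_⟩, fun x z r hr => ?_, fun x z y q hq => ⟨?_, ?_⟩,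
      fun x z r hr => ?_⟩
    · show E.em _ ∈ I; rw [E.compat_m]; exact hId _ _ hq
    · show E.em _ ∈ I; rw [E.compat_m]; exact hId' _ _ (hId' _ _ hq)
    · show E.em _ ∈ I; rw [E.compat_m]; exact hId' _ _ (hId _ _ hr)
    · show E.ep _ ∈ I; rw [E.compat_p]; exact hId _ _ hq
    · show E.ep _ ∈ I; rw [E.compat_p]; exact hId' _ _ (hId' _ _ hq)
    · show E.ep _ ∈ I; rw [E.compat_p]; exact hId' _ _ (hId _ _ hr)
  rcases hs.2 _ _ hpair with ⟨hQm, hQp⟩ | ⟨hQm, hQp⟩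
  · -- trivial pair ideal : I = ⊥
    left
    have hbrk : ∀ z ∈ I, (∀ u, ⁅z, E.em u⁆ ∈ I) ∧ ∀ v, ⁅z, E.ep v⁆ ∈ I :=
      fun z hz => ⟨fun u => hId' _ _ hz, fun v => hId' _ _ hz⟩
    have hm1 : ∀ z ∈ I, z ∈ fg.g (-1) → z = 0 := by
      intro z hz hz1
      obtain ⟨u, rfl⟩ := exists_em E hz1
      have : u ∈ I.comap E.em := hz
      rw [hQm, Submodule.mem_bot] at this
      rw [this, map_zero]
    have hp1 : ∀ z ∈ I, z ∈ fg.g 1 → z = 0 := by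
      intro z hz hz1
      obtain ⟨v, rfl⟩ := exists_ep E hz1
      have : v ∈ I.comap E.ep := hz
      rw [hQp, Submodule.mem_bot] at this
      rw [this, map_zero]
    rw [eq_bot_iff]
    intro x hx
    rw [Submodule.mem_bot, ← sum_pr fg x]
    refine Finset.sum_eq_zero ?_
    intro j hj
    have hjI : pr fg j x ∈ I := hGr x hx j
    have hjg : pr fg j x ∈ fg.g j := pr_mem fg j x
    rw [Finset.mem_Icc] at hj
    obtain ⟨hj1, hj2⟩ := hj
    interval_cases j
    · -- j = -2
      refine keyzero E ht (spanSm2_le_brk E (gm2_le_span E ht hjg)) (fun u => ?_) (fun v => ?_)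
      · exact bracket_vanish fg hjg (em_mem E u) (by norm_num)
      · exact hm1 _ ((hbrk _ hjI).2 v) (by simpa using fg.lie_mem (-2) 1 _ _ hjg (ep_mem E v))
    · exact hm1 _ hjI hjg
    · refine keyzero E ht (spanS0_le_brk E (g0_le_span E ht hjg)) (fun u => ?_) (fun v => ?_)
      · exact hm1 _ ((hbrk _ hjI).1 u) (by simpa using fg.lie_mem 0 (-1) _ _ hjg (em_mem E u))
      · exact hp1 _ ((hbrk _ hjI).2 v) (by simpa using fg.lie_mem 0 1 _ _ hjg (ep_mem E v))
    · exact hp1 _ hjI hjg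
    · refine keyzero E ht (spanSp2_le_brk E (gp2_le_span E ht hjg)) (fun u => ?_) (fun v => ?_)
      · exact hp1 _ ((hbrk _ hjI).1 u) (by simpa using fg.lie_mem 2 (-1) _ _ hjg (em_mem E u))
      · exact bracket_vanish fg hjg (ep_mem E v) (by norm_num)
  · -- full pair ideal : I = ⊤
    right
    let IL : LieSubalgebra K L := { I with lie_mem' := fun {x y} _ hy => hId x y hy }
    have hT : (Tsub fg : Set L) ⊆ IL := by
      intro w hw
      obtain ⟨a, ha, b, hb, rfl⟩ := Submodule.mem_sup.mp hw
      obtain ⟨x, rfl⟩ := exists_em E ha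
      obtain ⟨y, rfl⟩ := exists_ep E hb
      refine add_mem ?_ ?_
      · exact (show x ∈ I.comap E.em by rw [hQm]; trivial)
      · exact (show y ∈ I.comap E.ep by rw [hQp]; trivial)
    have hle := LieSubalgebra.lieSpan_le.mpr hT
    rw [ht.1] at hle
    exact eq_top_iff.mpr fun x _ => hle (show x ∈ (⊤ : LieSubalgebra K L) from trivial)

end S3
namespace S3

variable {K : Type*} [CommRing K] {Pm Pp : Type*} [AddCommGroup Pm] [AddCommGroup Pp]
  [Module K Pm] [Module K Pp] {L : Type*} [LieRing L] [LieAlgebra K L]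
  {KP : KantorPair K Pm Pp} {fg : FiveGrading K L}

lemma abs_large {j : ℤ} (h : j ∉ Finset.Icc (-2 : ℤ) 2) : 2 < |j| := by
  rw [Finset.mem_Icc] at h
  rcases not_and_or.mp h with h | h
  · rw [abs_of_neg (by omega)]; omega
  · rw [abs_of_pos (by omega)]; omega

lemma mem_zero_of_not_Icc {j : ℤ} (h : j ∉ Finset.Icc (-2 : ℤ) 2) {x : L} (hx : x ∈ fg.g j) :
    x = 0 := mem_vanish fg (abs_large h) hx

lemma pr_zero_of_not_Icc {j : ℤ} (h : j ∉ Finset.Icc (-2 : ℤ) 2) (x : L) : pr fg j x = 0 :=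
  mem_zero_of_not_Icc h (pr_mem fg j x)

/-- the degree-`d` component of an endomorphism -/
noncomputable def cd (fg : FiveGrading K L) (χ : Module.End K L) (d : ℤ) : Module.End K L :=
  ∑ k ∈ Finset.Icc (-2 : ℤ) 2, (pr fg (k + d)) ∘ₗ (χ ∘ₗ pr fg k)

lemma cd_apply_of_mem (χ : Module.End K L) (d : ℤ) {i : ℤ} (hi : i ∈ Finset.Icc (-2 : ℤ) 2)
    {x : L} (hx : x ∈ fg.g i) : cd fg χ d x = pr fg (i + d) (χ x) := by
  rw [cd, LinearMap.sum_apply]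
  rw [Finset.sum_eq_single i]
  · simp only [LinearMap.comp_apply, pr_of_mem_same fg hx]
  · intro k _ hk
    simp only [LinearMap.comp_apply, pr_of_mem_ne fg hx (Ne.symm hk), map_zero]
  · intro h; exact absurd hi h

/-- singling out a homogeneous component of `⁅χ x, y⁆` -/
lemma pr_lie_chi (χ : Module.End K L) {i j : ℤ} (hi : i ∈ Finset.Icc (-2 : ℤ) 2) {x y : L}
    (hx : x ∈ fg.g i) (hy : y ∈ fg.g j) (d : ℤ) :
    pr fg (i + j + d) ⁅χ x, y⁆ = ⁅pr fg (i + d) (χ x), y⁆ := by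
  conv_lhs => rw [← sum_pr fg (χ x), sum_lie', map_sum]
  rw [Finset.sum_eq_single (i + d)]
  · by_cases hmem : i + d ∈ Finset.Icc (-2 : ℤ) 2
    · refine pr_of_mem_same fg ?_
      have := fg.lie_mem (i + d) j _ _ (pr_mem fg (i + d) (χ x)) hy
      convert this using 2
      omega
    · rw [pr_zero_of_not_Icc hmem, zero_lie, map_zero]
  · intro k _ hk
    have : ⁅pr fg k (χ x), y⁆ ∈ fg.g (k + j) := fg.lie_mem k j _ _ (pr_mem fg k (χ x)) hy
    exact pr_of_mem_ne fg this (by omega)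
  · intro h
    rw [pr_zero_of_not_Icc h, zero_lie, map_zero]

lemma cd_lie_eq (χ : Module.End K L) (d : ℤ) {i : ℤ} {x y : L} (hi : i ∈ Finset.Icc (-2 : ℤ) 2)
    {j : ℤ} (hx : x ∈ fg.g i) (hy : y ∈ fg.g j) :
    cd fg χ d ⁅x, y⁆ = pr fg (i + j + d) (χ ⁅x, y⁆) := by
  by_cases hij : i + j ∈ Finset.Icc (-2 : ℤ) 2
  · exact cd_apply_of_mem χ d hij (fg.lie_mem i j x y hx hy)
  · have h0 : ⁅x, y⁆ = 0 := bracket_vanish fg hx hy (abs_large hij)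
    rw [h0]; simp

lemma cd_centroid {χ : Module.End K L} (hχ : χ ∈ LieCentroid K L) (d : ℤ) :
    cd fg χ d ∈ LieCentroid K L := by
  have key : ∀ i ∈ Finset.Icc (-2 : ℤ) 2, ∀ j ∈ Finset.Icc (-2 : ℤ) 2,
      ∀ x ∈ fg.g i, ∀ y ∈ fg.g j, cd fg χ d ⁅x, y⁆ = ⁅cd fg χ d x, y⁆ := by
    intro i hi j hj x hx y hy
    rw [cd_lie_eq χ d hi hx hy, hχ x y, pr_lie_chi χ hi hx hy d, cd_apply_of_mem χ d hi hx]
  intro x y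
  have e2 : cd fg χ d ⁅x, y⁆ = ∑ i ∈ Finset.Icc (-2 : ℤ) 2, ∑ j ∈ Finset.Icc (-2 : ℤ) 2,
      cd fg χ d ⁅pr fg i x, pr fg j y⁆ := by
    have e1 : ⁅x, y⁆ = ∑ i ∈ Finset.Icc (-2 : ℤ) 2, ∑ j ∈ Finset.Icc (-2 : ℤ) 2,
        ⁅pr fg i x, pr fg j y⁆ := by
      conv_lhs => rw [← sum_pr fg x, ← sum_pr fg y]
      rw [sum_lie']
      exact Finset.sum_congr rfl fun i _ => lie_sum' _ _ _
    rw [e1, map_sum]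
    exact Finset.sum_congr rfl fun i _ => map_sum _ _ _
  have e3 : ⁅cd fg χ d x, y⁆ = ∑ i ∈ Finset.Icc (-2 : ℤ) 2, ∑ j ∈ Finset.Icc (-2 : ℤ) 2,
      ⁅cd fg χ d (pr fg i x), pr fg j y⁆ := by
    conv_lhs => rw [← sum_pr fg x, ← sum_pr fg y]
    rw [map_sum, sum_lie']
    exact Finset.sum_congr rfl fun i _ => lie_sum' _ _ _
  rw [e2, e3]
  refine Finset.sum_congr rfl fun i hi => Finset.sum_congr rfl fun j hj => ?_
  exact key i hi j hj _ (pr_mem fg i x) _ (pr_mem fg j y)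

lemma cd_pr (χ : Module.End K L) (d : ℤ) (j : ℤ) (x : L) :
    cd fg χ d (pr fg j x) = pr fg (j + d) (cd fg χ d x) := by
  by_cases hj : j ∈ Finset.Icc (-2 : ℤ) 2
  · rw [cd_apply_of_mem χ d hj (pr_mem fg j x)]
    rw [cd, LinearMap.sum_apply, map_sum]
    rw [Finset.sum_eq_single j]
    · simp only [LinearMap.comp_apply]
      rw [pr_of_mem_same fg (pr_mem fg (j + d) (χ (pr fg j x)))]
    · intro k _ hk
      simp only [LinearMap.comp_apply]
      exact pr_of_mem_ne fg (pr_mem fg (k + d) _) (by omega)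
    · intro h; exact absurd hj h
  · rw [pr_zero_of_not_Icc hj, map_zero, cd, LinearMap.sum_apply, map_sum, eq_comm]
    refine Finset.sum_eq_zero fun k hk => ?_
    simp only [LinearMap.comp_apply]
    exact pr_of_mem_ne fg (pr_mem fg (k + d) _)
      (by rw [Finset.mem_Icc] at hk; rw [Finset.mem_Icc] at hj; omega)

lemma cd_eq_zero (E : Envelops KP fg) (hs : KP.IsSimplePair) (ht : Tight K fg)
    {χ : Module.End K L} (hχ : χ ∈ LieCentroid K L) {d : ℤ} (hd : d ≠ 0) :
    cd fg χ d = 0 := by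
  obtain ⟨⟨x0, hx0⟩, ⟨y0, hy0⟩⟩ := exists_ne_zero hs
  have hcd := cd_centroid (fg := fg) hχ d
  have hker := graded_simple E hs ht (LinearMap.ker (cd fg χ d))
    (fun u x hx => by
      rw [LinearMap.mem_ker, cent_snd hcd u x, LinearMap.mem_ker.mp hx, lie_zero])
    (fun x hx j => by
      rw [LinearMap.mem_ker, cd_pr χ d j x, LinearMap.mem_ker.mp hx, map_zero])
  rcases hker with hker | hker
  · exfalso
    rcases lt_or_gt_of_ne hd with hdneg | hdpos
    · -- d < 0 : use g (-2) or em x0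
      by_cases h2 : fg.g (-2) = ⊥
      · have hmem : E.em x0 ∈ LinearMap.ker (cd fg χ d) := by
          rw [LinearMap.mem_ker, cd_apply_of_mem χ d (by norm_num) (em_mem E x0)]
          by_cases hc : (-1 : ℤ) + d ∈ Finset.Icc (-2 : ℤ) 2
          · have : (-1 : ℤ) + d = -2 := by rw [Finset.mem_Icc] at hc; omega
            rw [this]
            have := pr_mem fg (-2) (χ (E.em x0))
            rw [h2] at this
            simpa using this
          · exact pr_zero_of_not_Icc hc _
        rw [hker, Submodule.mem_bot] at hmem
        exact em_ne_zero E hx0 hmem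
      · obtain ⟨w, hw, hwne⟩ := (Submodule.ne_bot_iff _).mp h2
        have hmem : w ∈ LinearMap.ker (cd fg χ d) := by
          rw [LinearMap.mem_ker, cd_apply_of_mem χ d (by norm_num) hw]
          exact pr_zero_of_not_Icc (by rw [Finset.mem_Icc]; omega) _
        rw [hker, Submodule.mem_bot] at hmem
        exact hwne hmem
    · -- d > 0
      by_cases h2 : fg.g 2 = ⊥
      · have hmem : E.ep y0 ∈ LinearMap.ker (cd fg χ d) := by
          rw [LinearMap.mem_ker, cd_apply_of_mem χ d (by norm_num) (ep_mem E y0)]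
          by_cases hc : (1 : ℤ) + d ∈ Finset.Icc (-2 : ℤ) 2
          · have : (1 : ℤ) + d = 2 := by rw [Finset.mem_Icc] at hc; omega
            rw [this]
            have := pr_mem fg 2 (χ (E.ep y0))
            rw [h2] at this
            simpa using this
          · exact pr_zero_of_not_Icc hc _
        rw [hker, Submodule.mem_bot] at hmem
        exact ep_ne_zero E hy0 hmem
      · obtain ⟨w, hw, hwne⟩ := (Submodule.ne_bot_iff _).mp h2
        have hmem : w ∈ LinearMap.ker (cd fg χ d) := by
          rw [LinearMap.mem_ker, cd_apply_of_mem χ d (by norm_num) hw]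
          exact pr_zero_of_not_Icc (by rw [Finset.mem_Icc]; omega) _
        rw [hker, Submodule.mem_bot] at hmem
        exact hwne hmem
  · ext x
    have : x ∈ LinearMap.ker (cd fg χ d) := by rw [hker]; trivial
    simpa using this

/-- Part 1: every centroid element preserves the grading -/
lemma centroid_graded (E : Envelops KP fg) (hs : KP.IsSimplePair) (ht : Tight K fg)
    {χ : Module.End K L} (hχ : χ ∈ LieCentroid K L) (i : ℤ) (x : L) (hx : x ∈ fg.g i) :
    χ x ∈ fg.g i := by
  by_cases hi : i ∈ Finset.Icc (-2 : ℤ) 2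
  · have hχx : χ x = pr fg i (χ x) := by
      conv_lhs => rw [← sum_pr fg (χ x)]
      rw [Finset.sum_eq_single i]
      · intro j hj hji
        have : cd fg χ (j - i) x = pr fg j (χ x) := by
          have := cd_apply_of_mem χ (j - i) hi hx
          rwa [show i + (j - i) = j by omega] at this
        rw [← this, cd_eq_zero E hs ht hχ (by omega)]
        rfl
      · intro h; exact absurd hi h
    rw [hχx]
    exact pr_mem fg i (χ x)
  · rw [mem_zero_of_not_Icc hi hx, map_zero]
    exact zero_mem _

end S3
namespace S3

variable {K : Type*} [CommRing K] {Pm Pp : Type*} [AddCommGroup Pm] [AddCommGroup Pp]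
  [Module K Pm] [Module K Pp] {L : Type*} [LieRing L] [LieAlgebra K L]
  {KP : KantorPair K Pm Pp} {fg : FiveGrading K L}

variable (E : Envelops KP fg)

noncomputable def emE : Pm ≃ₗ[K] fg.g (-1) :=
  (LinearEquiv.ofInjective E.em E.inj_m).trans (LinearEquiv.ofEq _ _ E.range_m)

noncomputable def epE : Pp ≃ₗ[K] fg.g 1 :=
  (LinearEquiv.ofInjective E.ep E.inj_p).trans (LinearEquiv.ofEq _ _ E.range_p)

lemma emE_apply (u : Pm) : ((emE E u : fg.g (-1)) : L) = E.em u := by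
  simp [emE]

lemma epE_apply (u : Pp) : ((epE E u : fg.g 1) : L) = E.ep u := by
  simp [epE]

lemma emE_symm (v : fg.g (-1)) : E.em ((emE E).symm v) = (v : L) := by
  rw [← emE_apply E, LinearEquiv.apply_symm_apply]

lemma epE_symm (v : fg.g 1) : E.ep ((epE E).symm v) = (v : L) := by
  rw [← epE_apply E, LinearEquiv.apply_symm_apply]

/-- restriction of a grading-preserving endomorphism to the pair -/
lemma exists_restr (χ : Module.End K L) (hgrm : ∀ x, χ (E.em x) ∈ fg.g (-1))
    (hgrp : ∀ y, χ (E.ep y) ∈ fg.g 1) :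
    ∃ (ωm : Pm →ₗ[K] Pm) (ωp : Pp →ₗ[K] Pp),
      (∀ x, χ (E.em x) = E.em (ωm x)) ∧ (∀ y, χ (E.ep y) = E.ep (ωp y)) := by
  refine ⟨(emE E).symm.toLinearMap ∘ₗ LinearMap.codRestrict (fg.g (-1)) (χ ∘ₗ E.em) hgrm,
    (epE E).symm.toLinearMap ∘ₗ LinearMap.codRestrict (fg.g 1) (χ ∘ₗ E.ep) hgrp,
    fun x => ?_, fun y => ?_⟩
  · rw [LinearMap.comp_apply, LinearEquiv.coe_coe, emE_symm E]
    rfl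
  · rw [LinearMap.comp_apply, LinearEquiv.coe_coe, epE_symm E]
    rfl

/-- restricted maps lie in the pair centroid -/
lemma restr_incentroid {χ : Module.End K L} (hχ : χ ∈ LieCentroid K L)
    {ωm : Pm →ₗ[K] Pm} {ωp : Pp →ₗ[K] Pp}
    (hm : ∀ x, χ (E.em x) = E.em (ωm x)) (hp : ∀ y, χ (E.ep y) = E.ep (ωp y)) :
    KP.InCentroid ωm ωp := by
  constructor
  · intro x y z
    refine ⟨E.inj_m ?_, E.inj_m ?_, E.inj_m ?_⟩
    · rw [← hm, E.compat_m, E.compat_m, hχ, hχ, hm]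
    · rw [← hm, E.compat_m, E.compat_m, hχ, cent_snd hχ, hp]
    · rw [← hm, E.compat_m, E.compat_m, cent_snd hχ, hm]
  · intro x y z
    refine ⟨E.inj_p ?_, E.inj_p ?_, E.inj_p ?_⟩
    · rw [← hp, E.compat_p, E.compat_p, hχ, hχ, hp]
    · rw [← hp, E.compat_p, E.compat_p, hχ, cent_snd hχ, hm]
    · rw [← hp, E.compat_p, E.compat_p, cent_snd hχ, hp]

/-- two centroid elements agreeing on the pair agree -/
lemma centroid_ext (ht : Tight K fg) {χ χ' : Module.End K L}
    (hχ : χ ∈ LieCentroid K L) (hχ' : χ' ∈ LieCentroid K L)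
    (hm : ∀ x, χ (E.em x) = χ' (E.em x)) (hp : ∀ y, χ (E.ep y) = χ' (E.ep y)) : χ = χ' := by
  set D : Module.End K L := χ - χ' with hD
  have hDc : ∀ x y : L, D ⁅x, y⁆ = ⁅D x, y⁆ := by
    intro x y
    simp only [hD, LinearMap.sub_apply, hχ x y, hχ' x y, sub_lie]
  have hker : ∀ u : L, u ∈ (⊤ : LieSubalgebra K L) → True := fun _ _ => trivial
  clear hker
  let C : LieSubalgebra K L :=
    { carrier := {u | D u = 0}
      add_mem' := by intro a b ha hb; simp only [Set.mem_setOf_eq, map_add] at *; rw [ha, hb, add_zero]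
      zero_mem' := by simp
      smul_mem' := by intro c a ha; simp only [Set.mem_setOf_eq, map_smul] at *; rw [ha, smul_zero]
      lie_mem' := by
        intro a b ha hb
        simp only [Set.mem_setOf_eq] at *
        rw [hDc a b, ha, zero_lie] }
  have hT : (Tsub fg : Set L) ⊆ C := by
    intro w hw
    obtain ⟨a, ha, b, hb, rfl⟩ := Submodule.mem_sup.mp hw
    obtain ⟨x, rfl⟩ := exists_em E ha
    obtain ⟨y, rfl⟩ := exists_ep E hb
    show D (E.em x + E.ep y) = 0
    rw [map_add]
    simp only [hD, LinearMap.sub_apply]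
    rw [hm, hp]
    abel
  have hle := LieSubalgebra.lieSpan_le.mpr hT
  rw [ht.1] at hle
  ext u
  have : D u = 0 := hle (show u ∈ (⊤ : LieSubalgebra K L) from trivial)
  have := sub_eq_zero.mp (by simpa [hD, LinearMap.sub_apply] using this)
  exact this

lemma smul_one_centroid (a : K) : (a • (1 : Module.End K L)) ∈ LieCentroid K L := by
  intro x y
  simp [smul_lie]

end S3
namespace S3

open TensorProduct

variable {K : Type*} [CommRing K] {Pm Pp : Type*} [AddCommGroup Pm] [AddCommGroup Pp]
  [Module K Pm] [Module K Pp] {L : Type*} [LieRing L] [LieAlgebra K L]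
  {KP : KantorPair K Pm Pp} {fg : FiveGrading K L}

/-- `(x, y) ↦ tm x y u` -/
def tmB (KP : KantorPair K Pm Pp) (u : Pm) : Pm →ₗ[K] Pp →ₗ[K] Pm :=
  LinearMap.mk₂ K (fun x y => KP.tm x y u) (fun x x' y => KP.tm_add₁ x x' y u)
    (fun a x y => KP.tm_smul₁ a x y u) (fun x y y' => KP.tm_add₂ x y y' u)
    (fun a x y => KP.tm_smul₂ a x y u)

/-- `(x, y) ↦ tp y x v` -/
def tpB (KP : KantorPair K Pm Pp) (v : Pp) : Pm →ₗ[K] Pp →ₗ[K] Pp :=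
  LinearMap.mk₂ K (fun x y => KP.tp y x v) (fun x x' y => KP.tp_add₂ y x x' v)
    (fun a x y => KP.tp_smul₂ a y x v) (fun x y y' => KP.tp_add₁ y y' x v)
    (fun a x y => KP.tp_smul₁ a y x v)

/-- `(x, x') ↦ tm x v x' - tm x' v x` -/
def km2 (KP : KantorPair K Pm Pp) (v : Pp) : Pm →ₗ[K] Pm →ₗ[K] Pm :=
  LinearMap.mk₂ K (fun x x' => KP.tm x v x' - KP.tm x' v x)
    (fun x y x' => by rw [KP.tm_add₁ x y v x', KP.tm_add₃ x' v x y]; abel)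
    (fun a x x' => by rw [KP.tm_smul₁ a x v x', KP.tm_smul₃ a x' v x, smul_sub])
    (fun x x' y => by rw [KP.tm_add₃ x v x' y, KP.tm_add₁ x' y v x]; abel)
    (fun a x x' => by rw [KP.tm_smul₃ a x v x', KP.tm_smul₁ a x' v x, smul_sub])

/-- `(y, y') ↦ tp y u y' - tp y' u y` -/
def kp2 (KP : KantorPair K Pm Pp) (u : Pm) : Pp →ₗ[K] Pp →ₗ[K] Pp :=
  LinearMap.mk₂ K (fun y y' => KP.tp y u y' - KP.tp y' u y)
    (fun x y x' => by rw [KP.tp_add₁ x y u x', KP.tp_add₃ x' u x y]; abel)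
    (fun a x x' => by rw [KP.tp_smul₁ a x u x', KP.tp_smul₃ a x' u x, smul_sub])
    (fun x x' y => by rw [KP.tp_add₃ x u x' y, KP.tp_add₁ x' y u x]; abel)
    (fun a x x' => by rw [KP.tp_smul₃ a x u x', KP.tp_smul₁ a x' u x, smul_sub])

variable (E : Envelops KP fg)

/-- `(x, y) ↦ ⁅em x, ep y⁆` -/
noncomputable def brMP : Pm →ₗ[K] Pp →ₗ[K] L :=
  LinearMap.mk₂ K (fun x y => ⁅E.em x, E.ep y⁆)
    (fun x x' y => by rw [map_add, add_lie]) (fun a x y => by rw [map_smul, smul_lie])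
    (fun x y y' => by rw [map_add, lie_add]) (fun a x y => by rw [map_smul, lie_smul])

noncomputable def brMM : Pm →ₗ[K] Pm →ₗ[K] L :=
  LinearMap.mk₂ K (fun x x' => ⁅E.em x, E.em x'⁆)
    (fun x x' y => by rw [map_add, add_lie]) (fun a x y => by rw [map_smul, smul_lie])
    (fun x y y' => by rw [map_add, lie_add]) (fun a x y => by rw [map_smul, lie_smul])

noncomputable def brPP : Pp →ₗ[K] Pp →ₗ[K] L :=
  LinearMap.mk₂ K (fun y y' => ⁅E.ep y, E.ep y'⁆)
    (fun x x' y => by rw [map_add, add_lie]) (fun a x y => by rw [map_smul, smul_lie])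
    (fun x y y' => by rw [map_add, lie_add]) (fun a x y => by rw [map_smul, lie_smul])

variable (ωm : Pm →ₗ[K] Pm) (ωp : Pp →ₗ[K] Pp)

noncomputable def TA0 : Pm ⊗[K] Pp →ₗ[K] L := TensorProduct.lift (brMP E)
noncomputable def TB0 : Pm ⊗[K] Pp →ₗ[K] L := TensorProduct.lift ((brMP E).comp ωm)
noncomputable def TAm2 : Pm ⊗[K] Pm →ₗ[K] L := TensorProduct.lift (brMM E)
noncomputable def TBm2 : Pm ⊗[K] Pm →ₗ[K] L := TensorProduct.lift ((brMM E).comp ωm)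
noncomputable def TAp2 : Pp ⊗[K] Pp →ₗ[K] L := TensorProduct.lift (brPP E)
noncomputable def TBp2 : Pp ⊗[K] Pp →ₗ[K] L := TensorProduct.lift ((brPP E).comp ωp)

lemma TA0_tmul (x : Pm) (y : Pp) : TA0 E (x ⊗ₜ y) = ⁅E.em x, E.ep y⁆ := rfl
lemma TB0_tmul (x : Pm) (y : Pp) : TB0 E ωm (x ⊗ₜ y) = ⁅E.em (ωm x), E.ep y⁆ := rfl
lemma TAm2_tmul (x x' : Pm) : TAm2 E (x ⊗ₜ x') = ⁅E.em x, E.em x'⁆ := rfl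
lemma TBm2_tmul (x x' : Pm) : TBm2 E ωm (x ⊗ₜ x') = ⁅E.em (ωm x), E.em x'⁆ := rfl
lemma TAp2_tmul (y y' : Pp) : TAp2 E (y ⊗ₜ y') = ⁅E.ep y, E.ep y'⁆ := rfl
lemma TBp2_tmul (y y' : Pp) : TBp2 E ωp (y ⊗ₜ y') = ⁅E.ep (ωp y), E.ep y'⁆ := rfl

end S3
namespace S3

open TensorProduct

variable {K : Type*} [CommRing K] {Pm Pp : Type*} [AddCommGroup Pm] [AddCommGroup Pp]
  [Module K Pm] [Module K Pp] {L : Type*} [LieRing L] [LieAlgebra K L]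
  {KP : KantorPair K Pm Pp} {fg : FiveGrading K L}

variable (E : Envelops KP fg) (ωm : Pm →ₗ[K] Pm) (ωp : Pp →ₗ[K] Pp)

lemma TA0_mem (t : Pm ⊗[K] Pp) : TA0 E t ∈ fg.g 0 := by
  induction t with
  | zero => simp
  | tmul x y => exact fg.lie_mem (-1) 1 _ _ (em_mem E x) (ep_mem E y)
  | add a b ha hb => rw [map_add]; exact add_mem ha hb

lemma TB0_mem (t : Pm ⊗[K] Pp) : TB0 E ωm t ∈ fg.g 0 := by
  induction t with
  | zero => simp
  | tmul x y => exact fg.lie_mem (-1) 1 _ _ (em_mem E (ωm x)) (ep_mem E y)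
  | add a b ha hb => rw [map_add]; exact add_mem ha hb

lemma TAm2_mem (t : Pm ⊗[K] Pm) : TAm2 E t ∈ fg.g (-2) := by
  induction t with
  | zero => simp
  | tmul x y => exact fg.lie_mem (-1) (-1) _ _ (em_mem E x) (em_mem E y)
  | add a b ha hb => rw [map_add]; exact add_mem ha hb

lemma TBm2_mem (t : Pm ⊗[K] Pm) : TBm2 E ωm t ∈ fg.g (-2) := by
  induction t with
  | zero => simp
  | tmul x y => exact fg.lie_mem (-1) (-1) _ _ (em_mem E (ωm x)) (em_mem E y)
  | add a b ha hb => rw [map_add]; exact add_mem ha hb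

lemma TAp2_mem (t : Pp ⊗[K] Pp) : TAp2 E t ∈ fg.g 2 := by
  induction t with
  | zero => simp
  | tmul x y => exact fg.lie_mem 1 1 _ _ (ep_mem E x) (ep_mem E y)
  | add a b ha hb => rw [map_add]; exact add_mem ha hb

lemma TBp2_mem (t : Pp ⊗[K] Pp) : TBp2 E ωp t ∈ fg.g 2 := by
  induction t with
  | zero => simp
  | tmul x y => exact fg.lie_mem 1 1 _ _ (ep_mem E (ωp x)) (ep_mem E y)
  | add a b ha hb => rw [map_add]; exact add_mem ha hb

lemma TB0_mem_brk (t : Pm ⊗[K] Pp) : TB0 E ωm t ∈ brkSpan K (Tsub fg) (Tsub fg) := by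
  induction t with
  | zero => simp
  | tmul x y =>
    exact Submodule.subset_span ⟨_, em_mem_T E (ωm x), _, ep_mem_T E y, rfl⟩
  | add a b ha hb => rw [map_add]; exact add_mem ha hb

lemma TBm2_mem_brk (t : Pm ⊗[K] Pm) : TBm2 E ωm t ∈ brkSpan K (Tsub fg) (Tsub fg) := by
  induction t with
  | zero => simp
  | tmul x y =>
    exact Submodule.subset_span ⟨_, em_mem_T E (ωm x), _, em_mem_T E y, rfl⟩
  | add a b ha hb => rw [map_add]; exact add_mem ha hb

lemma TBp2_mem_brk (t : Pp ⊗[K] Pp) : TBp2 E ωp t ∈ brkSpan K (Tsub fg) (Tsub fg) := by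
  induction t with
  | zero => simp
  | tmul x y =>
    exact Submodule.subset_span ⟨_, ep_mem_T E (ωp x), _, ep_mem_T E y, rfl⟩
  | add a b ha hb => rw [map_add]; exact add_mem ha hb

lemma TA0_lie_em (t : Pm ⊗[K] Pp) (u : Pm) :
    ⁅TA0 E t, E.em u⁆ = E.em (TensorProduct.lift (tmB KP u) t) := by
  induction t with
  | zero => simp
  | tmul x y => exact (E.compat_m x u y).symm
  | add a b ha hb => rw [map_add, add_lie, ha, hb, map_add, map_add]

lemma TB0_lie_em (hω : KP.InCentroid ωm ωp) (t : Pm ⊗[K] Pp) (u : Pm) :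
    ⁅TB0 E ωm t, E.em u⁆ = E.em (ωm (TensorProduct.lift (tmB KP u) t)) := by
  induction t with
  | zero => simp
  | tmul x y =>
    show ⁅⁅E.em (ωm x), E.ep y⁆, E.em u⁆ = E.em (ωm (KP.tm x y u))
    rw [(hω.1 x y u).1, E.compat_m]
  | add a b ha hb => rw [map_add, add_lie, ha, hb, map_add, map_add, map_add]

lemma TA0_lie_ep (t : Pm ⊗[K] Pp) (v : Pp) :
    ⁅TA0 E t, E.ep v⁆ = -E.ep (TensorProduct.lift (tpB KP v) t) := by
  induction t with
  | zero => simp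
  | tmul x y => exact J0R E x y v
  | add a b ha hb => rw [map_add, add_lie, ha, hb, map_add, map_add, neg_add]

lemma TB0_lie_ep (hω : KP.InCentroid ωm ωp) (t : Pm ⊗[K] Pp) (v : Pp) :
    ⁅TB0 E ωm t, E.ep v⁆ = -E.ep (ωp (TensorProduct.lift (tpB KP v) t)) := by
  induction t with
  | zero => simp
  | tmul x y =>
    show ⁅⁅E.em (ωm x), E.ep y⁆, E.ep v⁆ = -E.ep (ωp (KP.tp y x v))
    rw [(hω.2 y x v).2.1, J0R]
  | add a b ha hb => rw [map_add, add_lie, ha, hb, map_add, map_add, map_add, neg_add]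

lemma TAm2_lie_ep (t : Pm ⊗[K] Pm) (v : Pp) :
    ⁅TAm2 E t, E.ep v⁆ = E.em (TensorProduct.lift (km2 KP v) t) := by
  induction t with
  | zero => simp
  | tmul x y =>
    show ⁅⁅E.em x, E.em y⁆, E.ep v⁆ = E.em (KP.tm x v y - KP.tm y v x)
    rw [Jm2, map_sub]
  | add a b ha hb => rw [map_add, add_lie, ha, hb, map_add, map_add]

lemma TBm2_lie_ep (hω : KP.InCentroid ωm ωp) (t : Pm ⊗[K] Pm) (v : Pp) :
    ⁅TBm2 E ωm t, E.ep v⁆ = E.em (ωm (TensorProduct.lift (km2 KP v) t)) := by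
  induction t with
  | zero => simp
  | tmul x y =>
    show ⁅⁅E.em (ωm x), E.em y⁆, E.ep v⁆ = E.em (ωm (KP.tm x v y - KP.tm y v x))
    rw [Jm2, map_sub, map_sub, (hω.1 x v y).1, (hω.1 y v x).2.2]
  | add a b ha hb => rw [map_add, add_lie, ha, hb, map_add, map_add, map_add]

lemma TAp2_lie_em (t : Pp ⊗[K] Pp) (u : Pm) :
    ⁅TAp2 E t, E.em u⁆ = E.ep (TensorProduct.lift (kp2 KP u) t) := by
  induction t with
  | zero => simp
  | tmul x y =>
    show ⁅⁅E.ep x, E.ep y⁆, E.em u⁆ = E.ep (KP.tp x u y - KP.tp y u x)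
    rw [Jp2, map_sub]
  | add a b ha hb => rw [map_add, add_lie, ha, hb, map_add, map_add]

lemma TBp2_lie_em (hω : KP.InCentroid ωm ωp) (t : Pp ⊗[K] Pp) (u : Pm) :
    ⁅TBp2 E ωp t, E.em u⁆ = E.ep (ωp (TensorProduct.lift (kp2 KP u) t)) := by
  induction t with
  | zero => simp
  | tmul x y =>
    show ⁅⁅E.ep (ωp x), E.ep y⁆, E.em u⁆ = E.ep (ωp (KP.tp x u y - KP.tp y u x))
    rw [Jp2, map_sub, map_sub, (hω.2 x u y).1, (hω.2 y u x).2.2]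
  | add a b ha hb => rw [map_add, add_lie, ha, hb, map_add, map_add, map_add]

lemma ker0 (ht : Tight K fg) (hω : KP.InCentroid ωm ωp) {t : Pm ⊗[K] Pp}
    (h : TA0 E t = 0) : TB0 E ωm t = 0 := by
  refine keyzero E ht (TB0_mem_brk E ωm t) (fun u => ?_) (fun v => ?_)
  · rw [TB0_lie_em E ωm ωp hω t u]
    have h0 : E.em (TensorProduct.lift (tmB KP u) t) = 0 := by
      rw [← TA0_lie_em E t u, h, zero_lie]
    have : TensorProduct.lift (tmB KP u) t = 0 := by
      apply E.inj_m; rw [h0, map_zero]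
    rw [this, map_zero, map_zero]
  · rw [TB0_lie_ep E ωm ωp hω t v]
    have h0 : -E.ep (TensorProduct.lift (tpB KP v) t) = 0 := by
      rw [← TA0_lie_ep E t v, h, zero_lie]
    have : TensorProduct.lift (tpB KP v) t = 0 := by
      apply E.inj_p
      have := neg_eq_zero.mp h0
      rw [this, map_zero]
    rw [this, map_zero, map_zero, neg_zero]

lemma kerm2 (ht : Tight K fg) (hω : KP.InCentroid ωm ωp) {t : Pm ⊗[K] Pm}
    (h : TAm2 E t = 0) : TBm2 E ωm t = 0 := by
  refine keyzero E ht (TBm2_mem_brk E ωm t) (fun u => ?_) (fun v => ?_)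
  · exact bracket_vanish fg (TBm2_mem E ωm t) (em_mem E u) (by norm_num)
  · rw [TBm2_lie_ep E ωm ωp hω t v]
    have h0 : E.em (TensorProduct.lift (km2 KP v) t) = 0 := by
      rw [← TAm2_lie_ep E t v, h, zero_lie]
    have : TensorProduct.lift (km2 KP v) t = 0 := by apply E.inj_m; rw [h0, map_zero]
    rw [this, map_zero, map_zero]

lemma kerp2 (ht : Tight K fg) (hω : KP.InCentroid ωm ωp) {t : Pp ⊗[K] Pp}
    (h : TAp2 E t = 0) : TBp2 E ωp t = 0 := by
  refine keyzero E ht (TBp2_mem_brk E ωp t) (fun u => ?_) (fun v => ?_)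
  · rw [TBp2_lie_em E ωm ωp hω t u]
    have h0 : E.ep (TensorProduct.lift (kp2 KP u) t) = 0 := by
      rw [← TAp2_lie_em E t u, h, zero_lie]
    have : TensorProduct.lift (kp2 KP u) t = 0 := by apply E.inj_p; rw [h0, map_zero]
    rw [this, map_zero, map_zero]
  · exact bracket_vanish fg (TBp2_mem E ωp t) (ep_mem E v) (by norm_num)

end S3
namespace S3

open TensorProduct

variable {K : Type*} [CommRing K] {Pm Pp : Type*} [AddCommGroup Pm] [AddCommGroup Pp]
  [Module K Pm] [Module K Pp] {L : Type*} [LieRing L] [LieAlgebra K L]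
  {KP : KantorPair K Pm Pp} {fg : FiveGrading K L}

variable (E : Envelops KP fg) (ωm : Pm →ₗ[K] Pm) (ωp : Pp →ₗ[K] Pp)

lemma g0_le_range (ht : Tight K fg) : fg.g 0 ≤ LinearMap.range (TA0 E) :=
  (g0_le_span E ht).trans (Submodule.span_le.mpr (by
    rintro w ⟨x, y, rfl⟩
    exact ⟨x ⊗ₜ y, rfl⟩))

lemma gm2_le_range (ht : Tight K fg) : fg.g (-2) ≤ LinearMap.range (TAm2 E) :=
  (gm2_le_span E ht).trans (Submodule.span_le.mpr (by
    rintro w ⟨x, y, rfl⟩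
    exact ⟨x ⊗ₜ y, rfl⟩))

lemma gp2_le_range (ht : Tight K fg) : fg.g 2 ≤ LinearMap.range (TAp2 E) :=
  (gp2_le_span E ht).trans (Submodule.span_le.mpr (by
    rintro w ⟨x, y, rfl⟩
    exact ⟨x ⊗ₜ y, rfl⟩))

noncomputable def F0' (ht : Tight K fg) (hω : KP.InCentroid ωm ωp) : fg.g 0 →ₗ[K] L :=
  (Submodule.liftQ (LinearMap.ker (TA0 E)) (TB0 E ωm)
      (fun t h => ker0 E ωm ωp ht hω (LinearMap.mem_ker.mp h))) ∘ₗ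
    ((LinearMap.quotKerEquivRange (TA0 E)).symm :
        LinearMap.range (TA0 E) →ₗ[K] Pm ⊗[K] Pp ⧸ LinearMap.ker (TA0 E)) ∘ₗ
    Submodule.inclusion (g0_le_range E ht)

noncomputable def Fm2' (ht : Tight K fg) (hω : KP.InCentroid ωm ωp) : fg.g (-2) →ₗ[K] L :=
  (Submodule.liftQ (LinearMap.ker (TAm2 E)) (TBm2 E ωm)
      (fun t h => kerm2 E ωm ωp ht hω (LinearMap.mem_ker.mp h))) ∘ₗ
    ((LinearMap.quotKerEquivRange (TAm2 E)).symm :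
        LinearMap.range (TAm2 E) →ₗ[K] Pm ⊗[K] Pm ⧸ LinearMap.ker (TAm2 E)) ∘ₗ
    Submodule.inclusion (gm2_le_range E ht)

noncomputable def Fp2' (ht : Tight K fg) (hω : KP.InCentroid ωm ωp) : fg.g 2 →ₗ[K] L :=
  (Submodule.liftQ (LinearMap.ker (TAp2 E)) (TBp2 E ωp)
      (fun t h => kerp2 E ωm ωp ht hω (LinearMap.mem_ker.mp h))) ∘ₗ
    ((LinearMap.quotKerEquivRange (TAp2 E)).symm :
        LinearMap.range (TAp2 E) →ₗ[K] Pp ⊗[K] Pp ⧸ LinearMap.ker (TAp2 E)) ∘ₗ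
    Submodule.inclusion (gp2_le_range E ht)

lemma F0'_apply (ht : Tight K fg) (hω : KP.InCentroid ωm ωp) (t : Pm ⊗[K] Pp)
    (h : TA0 E t ∈ fg.g 0) : F0' E ωm ωp ht hω ⟨TA0 E t, h⟩ = TB0 E ωm t := by
  unfold F0'
  simp only [LinearMap.comp_apply, LinearEquiv.coe_coe]
  have h1 : Submodule.inclusion (g0_le_range E ht) ⟨TA0 E t, h⟩
      = ⟨TA0 E t, LinearMap.mem_range_self _ t⟩ := rfl
  rw [h1, LinearMap.quotKerEquivRange_symm_apply_image, Submodule.mkQ_apply]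
  rfl

lemma Fm2'_apply (ht : Tight K fg) (hω : KP.InCentroid ωm ωp) (t : Pm ⊗[K] Pm)
    (h : TAm2 E t ∈ fg.g (-2)) : Fm2' E ωm ωp ht hω ⟨TAm2 E t, h⟩ = TBm2 E ωm t := by
  unfold Fm2'
  simp only [LinearMap.comp_apply, LinearEquiv.coe_coe]
  have h1 : Submodule.inclusion (gm2_le_range E ht) ⟨TAm2 E t, h⟩
      = ⟨TAm2 E t, LinearMap.mem_range_self _ t⟩ := rfl
  rw [h1, LinearMap.quotKerEquivRange_symm_apply_image, Submodule.mkQ_apply]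
  rfl

lemma Fp2'_apply (ht : Tight K fg) (hω : KP.InCentroid ωm ωp) (t : Pp ⊗[K] Pp)
    (h : TAp2 E t ∈ fg.g 2) : Fp2' E ωm ωp ht hω ⟨TAp2 E t, h⟩ = TBp2 E ωp t := by
  unfold Fp2'
  simp only [LinearMap.comp_apply, LinearEquiv.coe_coe]
  have h1 : Submodule.inclusion (gp2_le_range E ht) ⟨TAp2 E t, h⟩
      = ⟨TAp2 E t, LinearMap.mem_range_self _ t⟩ := rfl
  rw [h1, LinearMap.quotKerEquivRange_symm_apply_image, Submodule.mkQ_apply]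
  rfl

/-- the candidate centroid element extending `ω` -/
noncomputable def chiW (ht : Tight K fg) (hω : KP.InCentroid ωm ωp) : Module.End K L :=
  E.em ∘ₗ ωm ∘ₗ ((emE E).symm : fg.g (-1) →ₗ[K] Pm) ∘ₗ prS fg (-1)
    + E.ep ∘ₗ ωp ∘ₗ ((epE E).symm : fg.g 1 →ₗ[K] Pp) ∘ₗ prS fg 1
    + F0' E ωm ωp ht hω ∘ₗ prS fg 0
    + Fm2' E ωm ωp ht hω ∘ₗ prS fg (-2)
    + Fp2' E ωm ωp ht hω ∘ₗ prS fg 2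

lemma chiW_apply (ht : Tight K fg) (hω : KP.InCentroid ωm ωp) (x : L) :
    chiW E ωm ωp ht hω x
      = E.em (ωm ((emE E).symm (prS fg (-1) x))) + E.ep (ωp ((epE E).symm (prS fg 1 x)))
        + F0' E ωm ωp ht hω (prS fg 0 x) + Fm2' E ωm ωp ht hω (prS fg (-2) x)
        + Fp2' E ωm ωp ht hω (prS fg 2 x) := rfl

lemma chiW_em (ht : Tight K fg) (hω : KP.InCentroid ωm ωp) (x : Pm) :
    chiW E ωm ωp ht hω (E.em x) = E.em (ωm x) := by
  rw [chiW_apply]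
  rw [prS_of_mem_ne (j := 1) fg (em_mem E x) (by norm_num), prS_of_mem_ne (j := 0) fg (em_mem E x) (by norm_num),
    prS_of_mem_ne (j := -2) fg (em_mem E x) (by norm_num), prS_of_mem_ne (j := 2) fg (em_mem E x) (by norm_num)]
  have h1 : prS fg (-1) (E.em x) = emE E x := by
    rw [prS_of_mem_same fg (em_mem E x)]
    exact Subtype.ext (emE_apply E x).symm
  rw [h1, LinearEquiv.symm_apply_apply]
  simp

lemma chiW_ep (ht : Tight K fg) (hω : KP.InCentroid ωm ωp) (y : Pp) :
    chiW E ωm ωp ht hω (E.ep y) = E.ep (ωp y) := by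
  rw [chiW_apply]
  rw [prS_of_mem_ne (j := -1) fg (ep_mem E y) (by norm_num), prS_of_mem_ne (j := 0) fg (ep_mem E y) (by norm_num),
    prS_of_mem_ne (j := -2) fg (ep_mem E y) (by norm_num), prS_of_mem_ne (j := 2) fg (ep_mem E y) (by norm_num)]
  have h1 : prS fg 1 (E.ep y) = epE E y := by
    rw [prS_of_mem_same fg (ep_mem E y)]
    exact Subtype.ext (epE_apply E y).symm
  rw [h1, LinearEquiv.symm_apply_apply]
  simp

lemma chiW_TA0 (ht : Tight K fg) (hω : KP.InCentroid ωm ωp) (t : Pm ⊗[K] Pp) :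
    chiW E ωm ωp ht hω (TA0 E t) = TB0 E ωm t := by
  rw [chiW_apply]
  rw [prS_of_mem_ne (j := -1) fg (TA0_mem E t) (by norm_num), prS_of_mem_ne (j := 1) fg (TA0_mem E t) (by norm_num),
    prS_of_mem_ne (j := -2) fg (TA0_mem E t) (by norm_num), prS_of_mem_ne (j := 2) fg (TA0_mem E t) (by norm_num),
    prS_of_mem_same fg (TA0_mem E t), F0'_apply E ωm ωp ht hω t (TA0_mem E t)]
  simp

lemma chiW_TAm2 (ht : Tight K fg) (hω : KP.InCentroid ωm ωp) (t : Pm ⊗[K] Pm) :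
    chiW E ωm ωp ht hω (TAm2 E t) = TBm2 E ωm t := by
  rw [chiW_apply]
  rw [prS_of_mem_ne (j := -1) fg (TAm2_mem E t) (by norm_num), prS_of_mem_ne (j := 1) fg (TAm2_mem E t) (by norm_num),
    prS_of_mem_ne (j := 0) fg (TAm2_mem E t) (by norm_num), prS_of_mem_ne (j := 2) fg (TAm2_mem E t) (by norm_num),
    prS_of_mem_same fg (TAm2_mem E t), Fm2'_apply E ωm ωp ht hω t (TAm2_mem E t)]
  simp

lemma chiW_TAp2 (ht : Tight K fg) (hω : KP.InCentroid ωm ωp) (t : Pp ⊗[K] Pp) :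
    chiW E ωm ωp ht hω (TAp2 E t) = TBp2 E ωp t := by
  rw [chiW_apply]
  rw [prS_of_mem_ne (j := -1) fg (TAp2_mem E t) (by norm_num), prS_of_mem_ne (j := 1) fg (TAp2_mem E t) (by norm_num),
    prS_of_mem_ne (j := 0) fg (TAp2_mem E t) (by norm_num), prS_of_mem_ne (j := -2) fg (TAp2_mem E t) (by norm_num),
    prS_of_mem_same fg (TAp2_mem E t), Fp2'_apply E ωm ωp ht hω t (TAp2_mem E t)]
  simp

end S3
namespace S3

open TensorProduct

variable {K : Type*} [CommRing K] {Pm Pp : Type*} [AddCommGroup Pm] [AddCommGroup Pp]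
  [Module K Pm] [Module K Pp] {L : Type*} [LieRing L] [LieAlgebra K L]
  {KP : KantorPair K Pm Pp} {fg : FiveGrading K L}

variable (E : Envelops KP fg) (ωm : Pm →ₗ[K] Pm) (ωp : Pp →ₗ[K] Pp)
  (ht : Tight K fg) (hω : KP.InCentroid ωm ωp)

include ht hω in
/-- tightness identity in degree `-2` -/
lemma Tm2id (a b : Pm) : ⁅E.em (ωm a), E.em b⁆ = ⁅E.em a, E.em (ωm b)⁆ := by
  rw [← sub_eq_zero]
  refine keyzero E ht ?_ (fun u => ?_) (fun v => ?_)
  · exact sub_mem (Submodule.subset_span ⟨_, em_mem_T E (ωm a), _, em_mem_T E b, rfl⟩)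
      (Submodule.subset_span ⟨_, em_mem_T E a, _, em_mem_T E (ωm b), rfl⟩)
  · rw [sub_lie, bracket_vanish fg (fg.lie_mem (-1) (-1) _ _ (em_mem E (ωm a)) (em_mem E b))
      (em_mem E u) (by norm_num), bracket_vanish fg
      (fg.lie_mem (-1) (-1) _ _ (em_mem E a) (em_mem E (ωm b))) (em_mem E u) (by norm_num),
      sub_zero]
  · rw [sub_lie, Jm2, Jm2]
    rw [← (hω.1 a v b).1, ← (hω.1 b v a).2.2, ← (hω.1 a v b).2.2, ← (hω.1 b v a).1]
    abel

include ht hω in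
/-- tightness identity in degree `0` -/
lemma T0id (a : Pm) (b : Pp) : ⁅E.em (ωm a), E.ep b⁆ = ⁅E.em a, E.ep (ωp b)⁆ := by
  rw [← sub_eq_zero]
  refine keyzero E ht ?_ (fun u => ?_) (fun v => ?_)
  · exact sub_mem (Submodule.subset_span ⟨_, em_mem_T E (ωm a), _, ep_mem_T E b, rfl⟩)
      (Submodule.subset_span ⟨_, em_mem_T E a, _, ep_mem_T E (ωp b), rfl⟩)
  · rw [sub_lie, ← E.compat_m, ← E.compat_m, ← (hω.1 a b u).1, ← (hω.1 a b u).2.1, sub_self]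
  · rw [sub_lie, J0R, J0R, ← (hω.2 b a v).2.1, ← (hω.2 b a v).1, sub_self]

include ht hω in
/-- tightness identity in degree `2` -/
lemma Tp2id (a b : Pp) : ⁅E.ep (ωp a), E.ep b⁆ = ⁅E.ep a, E.ep (ωp b)⁆ := by
  rw [← sub_eq_zero]
  refine keyzero E ht ?_ (fun u => ?_) (fun v => ?_)
  · exact sub_mem (Submodule.subset_span ⟨_, ep_mem_T E (ωp a), _, ep_mem_T E b, rfl⟩)
      (Submodule.subset_span ⟨_, ep_mem_T E a, _, ep_mem_T E (ωp b), rfl⟩)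
  · rw [sub_lie, Jp2, Jp2]
    rw [← (hω.2 a u b).1, ← (hω.2 b u a).2.2, ← (hω.2 a u b).2.2, ← (hω.2 b u a).1]
    abel
  · rw [sub_lie, bracket_vanish fg (fg.lie_mem 1 1 _ _ (ep_mem E (ωp a)) (ep_mem E b))
      (ep_mem E v) (by norm_num), bracket_vanish fg
      (fg.lie_mem 1 1 _ _ (ep_mem E a) (ep_mem E (ωp b))) (ep_mem E v) (by norm_num),
      sub_zero]

lemma comm_em_m (a b : Pm) :
    chiW E ωm ωp ht hω ⁅E.em a, E.em b⁆ = ⁅E.em a, chiW E ωm ωp ht hω (E.em b)⁆ := by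
  have h1 : ⁅E.em a, E.em b⁆ = TAm2 E (a ⊗ₜ b) := rfl
  rw [h1, chiW_TAm2, TBm2_tmul, Tm2id E ωm ωp ht hω, chiW_em]

lemma comm_em_p (a : Pm) (b : Pp) :
    chiW E ωm ωp ht hω ⁅E.em a, E.ep b⁆ = ⁅E.em a, chiW E ωm ωp ht hω (E.ep b)⁆ := by
  have h1 : ⁅E.em a, E.ep b⁆ = TA0 E (a ⊗ₜ b) := rfl
  rw [h1, chiW_TA0, TB0_tmul, T0id E ωm ωp ht hω, chiW_ep]

lemma comm_ep_p (a b : Pp) :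
    chiW E ωm ωp ht hω ⁅E.ep a, E.ep b⁆ = ⁅E.ep a, chiW E ωm ωp ht hω (E.ep b)⁆ := by
  have h1 : ⁅E.ep a, E.ep b⁆ = TAp2 E (a ⊗ₜ b) := rfl
  rw [h1, chiW_TAp2, TBp2_tmul, Tp2id E ωm ωp ht hω, chiW_ep]

lemma comm_ep_m (a : Pp) (b : Pm) :
    chiW E ωm ωp ht hω ⁅E.ep a, E.em b⁆ = ⁅E.ep a, chiW E ωm ωp ht hω (E.em b)⁆ := by
  have h1 : ⁅E.ep a, E.em b⁆ = -TA0 E (b ⊗ₜ a) := by rw [← lie_skew]; rfl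
  rw [h1, map_neg, chiW_TA0, TB0_tmul, chiW_em, ← lie_skew (E.ep a) (E.em (ωm b))]

lemma comm_em_0 (a : Pm) (t : Pm ⊗[K] Pp) :
    chiW E ωm ωp ht hω ⁅E.em a, TA0 E t⁆ = ⁅E.em a, chiW E ωm ωp ht hω (TA0 E t)⁆ := by
  rw [chiW_TA0]
  induction t with
  | zero => simp
  | tmul c d =>
    rw [TA0_tmul, TB0_tmul]
    have h1 : ⁅E.em a, ⁅E.em c, E.ep d⁆⁆ = -E.em (KP.tm c d a) := by
      rw [← lie_skew (E.em a) ⁅E.em c, E.ep d⁆, ← E.compat_m]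
    have h2 : ⁅E.em a, ⁅E.em (ωm c), E.ep d⁆⁆ = -E.em (KP.tm (ωm c) d a) := by
      rw [← lie_skew (E.em a) ⁅E.em (ωm c), E.ep d⁆, ← E.compat_m]
    rw [h1, h2, map_neg, chiW_em, ← (hω.1 c d a).1]
  | add s u hs hu =>
    rw [map_add, map_add, lie_add, lie_add, map_add, hs, hu]

lemma comm_em_m2 (a : Pm) (t : Pm ⊗[K] Pm) :
    chiW E ωm ωp ht hω ⁅E.em a, TAm2 E t⁆ = ⁅E.em a, chiW E ωm ωp ht hω (TAm2 E t)⁆ := by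
  rw [chiW_TAm2]
  rw [bracket_vanish fg (em_mem E a) (TAm2_mem E t) (by norm_num), map_zero,
    bracket_vanish fg (em_mem E a) (TBm2_mem E ωm t) (by norm_num)]

lemma comm_em_p2 (a : Pm) (t : Pp ⊗[K] Pp) :
    chiW E ωm ωp ht hω ⁅E.em a, TAp2 E t⁆ = ⁅E.em a, chiW E ωm ωp ht hω (TAp2 E t)⁆ := by
  rw [chiW_TAp2]
  induction t with
  | zero => simp
  | tmul c d =>
    rw [TAp2_tmul, TBp2_tmul]
    have h1 : ⁅E.em a, ⁅E.ep c, E.ep d⁆⁆ = -(E.ep (KP.tp c a d) - E.ep (KP.tp d a c)) := by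
      rw [← lie_skew (E.em a) ⁅E.ep c, E.ep d⁆, Jp2]
    have h2 : ⁅E.em a, ⁅E.ep (ωp c), E.ep d⁆⁆
        = -(E.ep (KP.tp (ωp c) a d) - E.ep (KP.tp d a (ωp c))) := by
      rw [← lie_skew (E.em a) ⁅E.ep (ωp c), E.ep d⁆, Jp2]
    rw [h1, h2, map_neg, map_sub, chiW_ep, chiW_ep, ← (hω.2 c a d).1, ← (hω.2 d a c).2.2]
  | add s u hs hu =>
    rw [map_add, map_add, lie_add, lie_add, map_add, hs, hu]

lemma comm_ep_0 (a : Pp) (t : Pm ⊗[K] Pp) :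
    chiW E ωm ωp ht hω ⁅E.ep a, TA0 E t⁆ = ⁅E.ep a, chiW E ωm ωp ht hω (TA0 E t)⁆ := by
  rw [chiW_TA0]
  induction t with
  | zero => simp
  | tmul c d =>
    rw [TA0_tmul, TB0_tmul]
    have h1 : ⁅E.ep a, ⁅E.em c, E.ep d⁆⁆ = E.ep (KP.tp d c a) := by
      rw [← lie_skew (E.ep a) ⁅E.em c, E.ep d⁆, J0R, neg_neg]
    have h2 : ⁅E.ep a, ⁅E.em (ωm c), E.ep d⁆⁆ = E.ep (KP.tp d (ωm c) a) := by
      rw [← lie_skew (E.ep a) ⁅E.em (ωm c), E.ep d⁆, J0R, neg_neg]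
    rw [h1, h2, chiW_ep, ← (hω.2 d c a).2.1]
  | add s u hs hu =>
    rw [map_add, map_add, lie_add, lie_add, map_add, hs, hu]

lemma comm_ep_m2 (a : Pp) (t : Pm ⊗[K] Pm) :
    chiW E ωm ωp ht hω ⁅E.ep a, TAm2 E t⁆ = ⁅E.ep a, chiW E ωm ωp ht hω (TAm2 E t)⁆ := by
  rw [chiW_TAm2]
  induction t with
  | zero => simp
  | tmul c d =>
    rw [TAm2_tmul, TBm2_tmul]
    have h1 : ⁅E.ep a, ⁅E.em c, E.em d⁆⁆ = -(E.em (KP.tm c a d) - E.em (KP.tm d a c)) := by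
      rw [← lie_skew (E.ep a) ⁅E.em c, E.em d⁆, Jm2]
    have h2 : ⁅E.ep a, ⁅E.em (ωm c), E.em d⁆⁆
        = -(E.em (KP.tm (ωm c) a d) - E.em (KP.tm d a (ωm c))) := by
      rw [← lie_skew (E.ep a) ⁅E.em (ωm c), E.em d⁆, Jm2]
    rw [h1, h2, map_neg, map_sub, chiW_em, chiW_em, ← (hω.1 c a d).1, ← (hω.1 d a c).2.2]
  | add s u hs hu =>
    rw [map_add, map_add, lie_add, lie_add, map_add, hs, hu]

lemma comm_ep_p2 (a : Pp) (t : Pp ⊗[K] Pp) :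
    chiW E ωm ωp ht hω ⁅E.ep a, TAp2 E t⁆ = ⁅E.ep a, chiW E ωm ωp ht hω (TAp2 E t)⁆ := by
  rw [chiW_TAp2]
  rw [bracket_vanish fg (ep_mem E a) (TAp2_mem E t) (by norm_num), map_zero,
    bracket_vanish fg (ep_mem E a) (TBp2_mem E ωp t) (by norm_num)]

end S3
namespace S3

open TensorProduct

variable {K : Type*} [CommRing K] {Pm Pp : Type*} [AddCommGroup Pm] [AddCommGroup Pp]
  [Module K Pm] [Module K Pp] {L : Type*} [LieRing L] [LieAlgebra K L]
  {KP : KantorPair K Pm Pp} {fg : FiveGrading K L}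

variable (E : Envelops KP fg) (ωm : Pm →ₗ[K] Pm) (ωp : Pp →ₗ[K] Pp)
  (ht : Tight K fg) (hω : KP.InCentroid ωm ωp)

lemma chiW_centroid : chiW E ωm ωp ht hω ∈ LieCentroid K L := by
  set χ := chiW E ωm ωp ht hω with hχdef
  have hcomm : ∀ y x : L, χ ⁅y, x⁆ = ⁅y, χ x⁆ := by
    have hhom : ∀ y : L, (∀ j, -2 ≤ j → j ≤ 2 → ∀ w ∈ fg.g j, χ ⁅y, w⁆ = ⁅y, χ w⁆) →
        ∀ x, χ ⁅y, x⁆ = ⁅y, χ x⁆ := by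
      intro y hy x
      conv_lhs => rw [← sum_pr fg x]
      conv_rhs => rw [← sum_pr fg x]
      rw [lie_sum', map_sum, map_sum, lie_sum']
      refine Finset.sum_congr rfl fun j hj => ?_
      rw [Finset.mem_Icc] at hj
      exact hy j hj.1 hj.2 _ (pr_mem fg j x)
    let W : LieSubalgebra K L :=
      { carrier := {y | ∀ x, χ ⁅y, x⁆ = ⁅y, χ x⁆}
        add_mem' := by
          intro a b ha hb
          intro x
          rw [add_lie, map_add, ha, hb, add_lie]
        zero_mem' := by intro x; simp
        smul_mem' := by
          intro c a ha
          intro x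
          rw [smul_lie, map_smul, ha, smul_lie]
        lie_mem' := by
          intro a b ha hb
          intro x
          rw [lie_lie, map_sub]
          have ha' : ∀ x, χ ⁅a, x⁆ = ⁅a, χ x⁆ := ha
          have hb' : ∀ x, χ ⁅b, x⁆ = ⁅b, χ x⁆ := hb
          simp only [ha', hb']
          exact (lie_lie a b (χ x)).symm }
    have hT : (Tsub fg : Set L) ⊆ W := by
      intro w hw
      obtain ⟨u, hu, v, hv, rfl⟩ := Submodule.mem_sup.mp hw
      obtain ⟨p, rfl⟩ := exists_em E hu
      obtain ⟨q, rfl⟩ := exists_ep E hv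
      refine add_mem ?_ ?_
      · show ∀ x, χ ⁅E.em p, x⁆ = ⁅E.em p, χ x⁆
        refine hhom _ (fun j hj1 hj2 w hwj => ?_)
        interval_cases j
        · obtain ⟨t, rfl⟩ := gm2_le_range E ht hwj
          exact comm_em_m2 E ωm ωp ht hω p t
        · obtain ⟨b, rfl⟩ := exists_em E hwj
          exact comm_em_m E ωm ωp ht hω p b
        · obtain ⟨t, rfl⟩ := g0_le_range E ht hwj
          exact comm_em_0 E ωm ωp ht hω p t
        · obtain ⟨b, rfl⟩ := exists_ep E hwj
          exact comm_em_p E ωm ωp ht hω p b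
        · obtain ⟨t, rfl⟩ := gp2_le_range E ht hwj
          exact comm_em_p2 E ωm ωp ht hω p t
      · show ∀ x, χ ⁅E.ep q, x⁆ = ⁅E.ep q, χ x⁆
        refine hhom _ (fun j hj1 hj2 w hwj => ?_)
        interval_cases j
        · obtain ⟨t, rfl⟩ := gm2_le_range E ht hwj
          exact comm_ep_m2 E ωm ωp ht hω q t
        · obtain ⟨b, rfl⟩ := exists_em E hwj
          exact comm_ep_m E ωm ωp ht hω q b
        · obtain ⟨t, rfl⟩ := g0_le_range E ht hwj
          exact comm_ep_0 E ωm ωp ht hω q t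
        · obtain ⟨b, rfl⟩ := exists_ep E hwj
          exact comm_ep_p E ωm ωp ht hω q b
        · obtain ⟨t, rfl⟩ := gp2_le_range E ht hwj
          exact comm_ep_p2 E ωm ωp ht hω q t
    have hle := LieSubalgebra.lieSpan_le.mpr hT
    rw [ht.1] at hle
    intro y x
    exact hle (show y ∈ (⊤ : LieSubalgebra K L) from trivial) x
  intro x y
  have h2 : χ ⁅x, y⁆ = -χ ⁅y, x⁆ := by rw [← lie_skew x y, map_neg]
  rw [h2, hcomm y x, lie_skew]

lemma zero_centroid : (0 : Module.End K L) ∈ LieCentroid K L := by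
  intro x y; simp

end S3
/-- Let `P` be a simple Kantor pair.  Then every centroid element of
`𝔎(P)` preserves the 5-grading (`C(𝔎(P),ℤ) = C(𝔎(P))`), the restriction map is an algebra
isomorphism of `C(𝔎(P))` onto `C(P)`, and `P` is central iff `𝔎(P)` is central.
(`𝔎(P)` is represented by an arbitrary 5-graded Lie algebra `L` tightly enveloping `P`.) -/
theorem statement3 {K : Type*} [CommRing K] (h6 : IsUnit (6 : K))
    {Pm Pp : Type*} [AddCommGroup Pm] [AddCommGroup Pp] [Module K Pm] [Module K Pp]
    (KP : KantorPair K Pm Pp) (hsimple : KP.IsSimplePair)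
    {L : Type*} [LieRing L] [LieAlgebra K L] (fg : FiveGrading K L)
    (E : Envelops KP fg) (ht : Tight K fg) :
    -- C(𝔎(P), ℤ) = C(𝔎(P)) : every centroid element is graded
    (∀ χ ∈ LieCentroid K L, ∀ (i : ℤ) (x : L), x ∈ fg.g i → χ x ∈ fg.g i) ∧
    -- restriction is a bijection from C(𝔎(P)) onto C(P) ...
    (∀ χ ∈ LieCentroid K L, ∃! ω : (Pm →ₗ[K] Pm) × (Pp →ₗ[K] Pp),
        KP.InCentroid ω.1 ω.2 ∧ RestrRel E χ ω) ∧
    (∀ ω : (Pm →ₗ[K] Pm) × (Pp →ₗ[K] Pp), KP.InCentroid ω.1 ω.2 →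
        ∃! χ : Module.End K L, χ ∈ LieCentroid K L ∧ RestrRel E χ ω) ∧
    -- ... which is an algebra map
    RestrRel E 1 (LinearMap.id, LinearMap.id) ∧
    (∀ (χ χ' : Module.End K L) (ω ω' : (Pm →ₗ[K] Pm) × (Pp →ₗ[K] Pp)),
      RestrRel E χ ω → RestrRel E χ' ω' →
        RestrRel E (χ * χ') (ω.1 ∘ₗ ω'.1, ω.2 ∘ₗ ω'.2) ∧
        RestrRel E (χ + χ') (ω.1 + ω'.1, ω.2 + ω'.2)) ∧
    (∀ (a : K) (χ : Module.End K L) (ω : (Pm →ₗ[K] Pm) × (Pp →ₗ[K] Pp)),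
      RestrRel E χ ω → RestrRel E (a • χ) (a • ω.1, a • ω.2)) ∧
    -- P is central iff 𝔎(P) is central
    (KP.IsCentralPair ↔
      ((∀ χ ∈ LieCentroid K L, ∃ a : K, χ = a • (1 : Module.End K L)) ∧
        ∀ a : K, a • (1 : Module.End K L) = 0 → a = 0)) := by
  refine ⟨fun χ hχ i x hx => S3.centroid_graded E hsimple ht hχ i x hx, ?_, ?_, ?_, ?_, ?_, ?_⟩
  · -- unique restriction
    intro χ hχ
    have hgrm : ∀ x, χ (E.em x) ∈ fg.g (-1) :=
      fun x => S3.centroid_graded E hsimple ht hχ (-1) _ (S3.em_mem E x)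
    have hgrp : ∀ y, χ (E.ep y) ∈ fg.g 1 :=
      fun y => S3.centroid_graded E hsimple ht hχ 1 _ (S3.ep_mem E y)
    obtain ⟨ωm, ωp, hm, hp⟩ := S3.exists_restr E χ hgrm hgrp
    refine ⟨(ωm, ωp), ⟨S3.restr_incentroid E hχ hm hp, hm, hp⟩, ?_⟩
    rintro ⟨ω1, ω2⟩ ⟨_, hm', hp'⟩
    refine Prod.ext_iff.mpr ⟨LinearMap.ext fun x => E.inj_m ?_, LinearMap.ext fun y => E.inj_p ?_⟩
    · exact (hm' x).symm.trans (hm x)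
    · exact (hp' y).symm.trans (hp y)
  · -- unique extension
    intro ω hω
    refine ⟨S3.chiW E ω.1 ω.2 ht hω,
      ⟨S3.chiW_centroid E ω.1 ω.2 ht hω, fun x => S3.chiW_em E ω.1 ω.2 ht hω x,
        fun y => S3.chiW_ep E ω.1 ω.2 ht hω y⟩, ?_⟩
    rintro χ' ⟨hχ', hm', hp'⟩
    refine S3.centroid_ext E ht hχ' (S3.chiW_centroid E ω.1 ω.2 ht hω) (fun x => ?_) (fun y => ?_)
    · rw [hm' x, S3.chiW_em]
    · rw [hp' y, S3.chiW_ep]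
  · -- identity
    exact ⟨fun x => rfl, fun y => rfl⟩
  · -- multiplicativity and additivity
    intro χ χ' ω ω' h h'
    constructor
    · refine ⟨fun x => ?_, fun y => ?_⟩
      · rw [Module.End.mul_apply, h'.1 x, h.1 _]; rfl
      · rw [Module.End.mul_apply, h'.2 y, h.2 _]; rfl
    · refine ⟨fun x => ?_, fun y => ?_⟩
      · rw [LinearMap.add_apply, h.1 x, h'.1 x, LinearMap.add_apply, map_add]
      · rw [LinearMap.add_apply, h.2 y, h'.2 y, LinearMap.add_apply, map_add]
  · -- smul
    intro a χ ω h
    refine ⟨fun x => ?_, fun y => ?_⟩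
    · rw [LinearMap.smul_apply, h.1 x, LinearMap.smul_apply, map_smul]
    · rw [LinearMap.smul_apply, h.2 y, LinearMap.smul_apply, map_smul]
  · -- centrality transfer
    constructor
    · intro hPc
      constructor
      · intro χ hχ
        have hgrm : ∀ x, χ (E.em x) ∈ fg.g (-1) :=
          fun x => S3.centroid_graded E hsimple ht hχ (-1) _ (S3.em_mem E x)
        have hgrp : ∀ y, χ (E.ep y) ∈ fg.g 1 :=
          fun y => S3.centroid_graded E hsimple ht hχ 1 _ (S3.ep_mem E y)
        obtain ⟨ωm, ωp, hm, hp⟩ := S3.exists_restr E χ hgrm hgrp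
        obtain ⟨a, ham, hap⟩ := hPc.1 ωm ωp (S3.restr_incentroid E hχ hm hp)
        refine ⟨a, S3.centroid_ext E ht hχ (S3.smul_one_centroid a) (fun x => ?_) (fun y => ?_)⟩
        · rw [hm x, ham]
          simp
        · rw [hp y, hap]
          simp
      · intro a h0
        refine hPc.2 a (LinearMap.ext fun x => ?_) (LinearMap.ext fun y => ?_)
        · apply E.inj_m
          have h1 : a • E.em x = 0 := by simpa using LinearMap.ext_iff.mp h0 (E.em x)
          simp [map_smul, h1]
        · apply E.inj_p
          have h1 : a • E.ep y = 0 := by simpa using LinearMap.ext_iff.mp h0 (E.ep y)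
          simp [map_smul, h1]
    · intro hLc
      constructor
      · intro ωm ωp hic
        obtain ⟨a, ha⟩ := hLc.1 _ (S3.chiW_centroid E ωm ωp ht hic)
        refine ⟨a, LinearMap.ext fun x => E.inj_m ?_, LinearMap.ext fun y => E.inj_p ?_⟩
        · have h2 : E.em (ωm x) = a • E.em x := by
            rw [← S3.chiW_em E ωm ωp ht hic x, ha]; simp
          rw [h2]; simp [map_smul]
        · have h2 : E.ep (ωp y) = a • E.ep y := by
            rw [← S3.chiW_ep E ωm ωp ht hic y, ha]; simp
          rw [h2]; simp [map_smul]
      · intro a h1 h2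
        refine hLc.2 a (S3.centroid_ext E ht (S3.smul_one_centroid a) S3.zero_centroid
          (fun x => ?_) (fun y => ?_))
        · have h3 : a • x = (0 : Pm) := by simpa using LinearMap.ext_iff.mp h1 x
          show a • (1 : Module.End K L) (E.em x) = (0 : Module.End K L) (E.em x)
          simp [← map_smul, h3]
        · have h3 : a • y = (0 : Pp) := by simpa using LinearMap.ext_iff.mp h2 y
          show a • (1 : Module.End K L) (E.ep y) = (0 : Module.End K L) (E.ep y)
          simp [← map_smul, h3]
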